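/- arXiv:1908.09012 — 8 statements merged into one kernel-verified Lean document; each statement's English description precedes it below -/
import Mathlib

section
/- Let E be an Archimedean Riesz space and (s_n)_{n∈ℕ} a sequence in the positive cone E_+ that order-converges to 0. Let (b_n)_{n∈ℕ} be a non-decreasing sequence of positive real numbers with b_n → ∞. Then the sequence z_n := (1/b_n) · Σ_{i=1}^{n-1} (b_{i+1} − b_i) • s_i order-converges to 0 as n → ∞. -/
open Filter

/-- A sequence `x` in a lattice-ordered abelian group order-converges to `l` if there is a
non-increasing sequence `v` with infimum `0` dominating `|x n - l|`. -/
def OrderConvTo {E : Type*} [Lattice E] [AddCommGroup E] (x : ℕ → E) (l : E) : Prop :=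
  ∃ v : ℕ → E, (∀ n, v (n + 1) ≤ v n) ∧ IsGLB (Set.range v) 0 ∧ ∀ n, |x n - l| ≤ v n

theorem weighted_cesaro_mean_order_tendsto_zero
    {E : Type*} [Lattice E] [AddCommGroup E] [Module ℝ E]
    [CovariantClass E E (· + ·) (· ≤ ·)] [PosSMulMono ℝ E]
    (harch : ∀ x : E, 0 ≤ x → IsGLB (Set.range fun n : ℕ => ((n : ℝ) + 1)⁻¹ • x) 0)
    (s : ℕ → E) (hs : ∀ n, 0 ≤ s n) (hconv : OrderConvTo s 0)
    (b : ℕ → ℝ) (hbmono : Monotone b) (hbpos : ∀ n, 0 < b n)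
    (hbtop : Tendsto b atTop atTop) :
    OrderConvTo (fun n => (b n)⁻¹ • ∑ i ∈ Finset.Ico 1 n, (b (i + 1) - b i) • s i) 0 := by
  haveI : IsOrderedAddMonoid E :=
    { add_le_add_left := fun a b h c => add_le_add_left h c }
  obtain ⟨v, hvdec, hvglb, hvs⟩ := hconv
  -- basic facts
  have hv0 : ∀ n, 0 ≤ v n := fun n => hvglb.1 ⟨n, rfl⟩
  have hvanti : Antitone v := antitone_nat_of_succ_le hvdec
  have hsv : ∀ n, s n ≤ v n := by
    intro n
    have := hvs n
    rwa [sub_zero, abs_of_nonneg (hs n)] at this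
  have hsm : ∀ (c : ℝ) (x : E), 0 ≤ c → 0 ≤ x → 0 ≤ c • x := by
    intro c x hc hx
    have := smul_le_smul_of_nonneg_left hx hc
    rwa [smul_zero] at this
  -- scalar monotonicity on nonneg vectors
  have hscmono : ∀ (c c' : ℝ) (x : E), c' ≤ c → 0 ≤ x → c' • x ≤ c • x := by
    intro c c' x hcc hx
    have h1 : 0 ≤ (c - c') • x := hsm _ _ (by linarith) hx
    calc c' • x = c' • x + 0 := by rw [add_zero]
      _ ≤ c' • x + (c - c') • x := by exact add_le_add_right h1 _
      _ = c • x := by rw [← add_smul]; ring_nf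
  -- the partial constant
  set C : ℕ → E := fun m => ∑ i ∈ Finset.Ico 1 (m + 1), (b (i + 1) - b i) • s i with hC
  have hterm : ∀ i, 0 ≤ (b (i + 1) - b i) • s i := fun i =>
    hsm _ _ (by have := hbmono (Nat.le_succ i); linarith) (hs i)
  have hC0 : ∀ m, 0 ≤ C m := by
    intro m
    rw [hC]
    exact Finset.sum_nonneg fun i _ => hterm i
  -- the dominating family
  set B : ℕ → ℕ → E := fun n m => (b n)⁻¹ • C m + v (m + 1) with hB
  have hB0 : ∀ n m, 0 ≤ B n m := fun n m =>
    add_nonneg (hsm _ _ (inv_nonneg.2 (hbpos n).le) (hC0 m)) (hv0 _)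
  -- z n ≤ B n m for all n m
  have hzB : ∀ n m, (b n)⁻¹ • ∑ i ∈ Finset.Ico 1 n, (b (i + 1) - b i) • s i ≤ B n m := by
    intro n m
    rcases Nat.eq_zero_or_pos n with hn | hn
    · subst hn; simp [hB0 0 m]
    set k := min (m + 1) n with hk
    have hk1 : 1 ≤ k := le_min (Nat.succ_le_succ (Nat.zero_le m)) hn
    have hkn : k ≤ n := min_le_right _ _
    have hsplit : ∑ i ∈ Finset.Ico 1 n, (b (i + 1) - b i) • s i
        = (∑ i ∈ Finset.Ico 1 k, (b (i + 1) - b i) • s i)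
          + ∑ i ∈ Finset.Ico k n, (b (i + 1) - b i) • s i :=
      (Finset.sum_Ico_consecutive _ hk1 hkn).symm
    have hkle : k ≤ m + 1 := hk ▸ min_le_left _ _
    have h1 : ∑ i ∈ Finset.Ico 1 k, (b (i + 1) - b i) • s i ≤ C m := by
      rw [hC]
      exact Finset.sum_le_sum_of_subset_of_nonneg
        (Finset.Ico_subset_Ico le_rfl hkle) (fun i _ _ => hterm i)
    have h2 : ∑ i ∈ Finset.Ico k n, (b (i + 1) - b i) • s i ≤ b n • v (m + 1) := by
      rcases lt_or_ge n (m + 1) with hnm | hnm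
      · have : k = n := min_eq_right hnm.le
        rw [this]
        simp only [Finset.Ico_self, Finset.sum_empty]
        exact hsm _ _ (hbpos n).le (hv0 _)
      · have hkm : k = m + 1 := min_eq_left hnm
        have step : ∀ i ∈ Finset.Ico k n, (b (i + 1) - b i) • s i
            ≤ (b (i + 1) - b i) • v (m + 1) := by
          intro i hi
          rw [Finset.mem_Ico] at hi
          have hik : m + 1 ≤ i := hkm ▸ hi.1
          have : s i ≤ v (m + 1) := (hsv i).trans (hvanti hik)
          exact smul_le_smul_of_nonneg_left this
            (by have := hbmono (Nat.le_succ i); linarith)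
        calc ∑ i ∈ Finset.Ico k n, (b (i + 1) - b i) • s i
            ≤ ∑ i ∈ Finset.Ico k n, (b (i + 1) - b i) • v (m + 1) :=
              Finset.sum_le_sum step
          _ = (∑ i ∈ Finset.Ico k n, (b (i + 1) - b i)) • v (m + 1) := by
              rw [Finset.sum_smul]
          _ = (b n - b k) • v (m + 1) := by
              rw [Finset.sum_Ico_eq_sub _ hkn, Finset.sum_range_sub, Finset.sum_range_sub]
              ring_nf
          _ ≤ b n • v (m + 1) :=
              hscmono _ _ _ (by have := hbpos k; linarith) (hv0 _)
    have hbn : (0:ℝ) < b n := hbpos n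
    calc (b n)⁻¹ • ∑ i ∈ Finset.Ico 1 n, (b (i + 1) - b i) • s i
        ≤ (b n)⁻¹ • (C m + b n • v (m + 1)) := by
          apply smul_le_smul_of_nonneg_left _ (inv_nonneg.2 (hbpos n).le)
          rw [hsplit]; exact add_le_add h1 h2
      _ = B n m := by
          rw [smul_add, inv_smul_smul₀ hbn.ne']
  -- B is antitone in n
  have hBanti : ∀ n m, B (n + 1) m ≤ B n m := by
    intro n m
    have hinv : (b (n + 1))⁻¹ ≤ (b n)⁻¹ :=
      inv_anti₀ (hbpos n) (hbmono (Nat.le_succ n))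
    exact add_le_add_left (hscmono _ _ _ hinv (hC0 m)) _
  -- the dominating sequence
  set w : ℕ → E := fun n => (Finset.range (n + 1)).inf' ⟨0, Finset.mem_range.2 (Nat.succ_pos n)⟩
    (fun m => B n m) with hw
  refine ⟨w, ?_, ?_, ?_⟩
  · -- w nonincreasing
    intro n
    apply Finset.le_inf'
    intro m hm
    have hm' : m ∈ Finset.range (n + 2) :=
      Finset.mem_range.2 ((Finset.mem_range.1 hm).trans (Nat.lt_succ_self _))
    exact le_trans (Finset.inf'_le _ hm') (hBanti n m)
  · constructor
    · rintro x ⟨n, rfl⟩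
      exact Finset.le_inf' _ _ fun m _ => hB0 n m
    · intro c hc
      -- c ≤ v (m+1) for all m
      have hcv : ∀ m, c ≤ v (m + 1) := by
        intro m
        have hlb : c - v (m + 1) ∈ lowerBounds
            (Set.range fun k : ℕ => ((k : ℝ) + 1)⁻¹ • C m) := by
          rintro x ⟨k, rfl⟩
          obtain ⟨N, hN⟩ := eventually_atTop.1 (hbtop.eventually_ge_atTop ((k : ℝ) + 1))
          set n := max N m with hn
          have hbn : (k : ℝ) + 1 ≤ b n := hN n (le_max_left _ _)
          have hwn : w n ≤ B n m :=
            Finset.inf'_le _ (Finset.mem_range.2 (Nat.lt_succ_of_le (le_max_right _ _)))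
          have hcB : c ≤ B n m := (hc ⟨n, rfl⟩).trans hwn
          have hinv : (b n)⁻¹ ≤ ((k : ℝ) + 1)⁻¹ := by
            apply inv_anti₀ (by positivity) hbn
          have : (b n)⁻¹ • C m ≤ ((k : ℝ) + 1)⁻¹ • C m := hscmono _ _ _ hinv (hC0 m)
          have : c ≤ ((k : ℝ) + 1)⁻¹ • C m + v (m + 1) :=
            hcB.trans (add_le_add_left this _)
          exact sub_le_iff_le_add.2 this
        have := (harch (C m) (hC0 m)).2 hlb
        exact sub_nonpos.1 this
      have : c ∈ lowerBounds (Set.range v) := by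
        rintro x ⟨n, rfl⟩
        cases n with
        | zero => exact (hcv 0).trans (hvdec 0)
        | succ k => exact hcv k
      exact hvglb.2 this
  · intro n
    rw [sub_zero]
    have hz0 : 0 ≤ (b n)⁻¹ • ∑ i ∈ Finset.Ico 1 n, (b (i + 1) - b i) • s i :=
      hsm _ _ (inv_nonneg.2 (hbpos n).le) (Finset.sum_nonneg fun i _ => hterm i)
    rw [abs_of_nonneg hz0]
    exact Finset.le_inf' _ _ fun m _ => hzB n m
end

section
/- Kronecker's Lemma in Riesz spaces: Let E be an Archimedean Riesz space and (x_n)_{n∈ℕ} a sequence in E whose partial sums Σ_{i=1}^n x_i order-converge (to some element of E) as n → ∞. Let (b_n)_{n∈ℕ} be a non-decreasing sequence of positive real numbers with b_n → ∞. Then (1/b_n) · Σ_{i=1}^{n} b_i • x_i order-converges to 0 as n → ∞. -/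
open Filter

set_option linter.unusedSectionVars false
set_option maxHeartbeats 1000000

section
variable {E : Type*} [Lattice E] [AddCommGroup E] [Module ℝ E]
    [CovariantClass E E (· + ·) (· ≤ ·)] [PosSMulMono ℝ E]

lemma my_abs_smul_le (c : ℝ) (hc : 0 ≤ c) (z : E) : |c • z| ≤ c • |z| := by
  have h1 : c • z ≤ c • |z| := smul_le_smul_of_nonneg_left (le_abs_self z) hc
  have h2 : -(c • z) ≤ c • |z| := by
    rw [← smul_neg]; exact smul_le_smul_of_nonneg_left (neg_le_abs z) hc
  exact sup_le h1 h2

lemma my_sum_le_sum (s : Finset ℕ) (f g : ℕ → E) (h : ∀ i ∈ s, f i ≤ g i) :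
    ∑ i ∈ s, f i ≤ ∑ i ∈ s, g i := by
  classical
  induction s using Finset.induction with
  | empty => simp
  | @insert a s ha ih =>
      rw [Finset.sum_insert ha, Finset.sum_insert ha]
      calc f a + ∑ i ∈ s, f i ≤ f a + ∑ i ∈ s, g i := by
            exact add_le_add_right (ih fun i hi => h i (Finset.mem_insert_of_mem hi)) _
        _ = (∑ i ∈ s, g i) + f a := add_comm _ _
        _ ≤ (∑ i ∈ s, g i) + g a := add_le_add_right (h a (Finset.mem_insert_self a s)) _
        _ = g a + ∑ i ∈ s, g i := add_comm _ _

lemma my_abs_sum_le (s : Finset ℕ) (f : ℕ → E) : |∑ i ∈ s, f i| ≤ ∑ i ∈ s, |f i| := by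
  classical
  induction s using Finset.induction with
  | empty => simp
  | @insert _ _ h ih =>
      rw [Finset.sum_insert h, Finset.sum_insert h]
      exact (abs_add_le _ _).trans (add_le_add_right ih _)

lemma my_smul_coeff_mono {c d : ℝ} (h : c ≤ d) {z : E} (hz : 0 ≤ z) : c • z ≤ d • z := by
  have h1 : (0:E) ≤ (d - c) • z := by
    simpa using smul_le_smul_of_nonneg_left hz (sub_nonneg.2 h)
  have h2 : c • z + (d - c) • z = d • z := by rw [← add_smul]; ring_nf
  calc c • z ≤ c • z + (d - c) • z := le_add_of_nonneg_right h1
    _ = d • z := h2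

lemma my_smul_nonneg' (c : ℝ) (hc : 0 ≤ c) {z : E} (hz : 0 ≤ z) : (0:E) ≤ c • z := by
  simpa using smul_le_smul_of_nonneg_left hz hc

lemma my_tele (b : ℕ → ℝ) (k m : ℕ) (h : k ≤ m + 1) :
    ∑ i ∈ Finset.Icc k m, (b (i + 1) - b i) = b (m + 1) - b k := by
  have hs : Finset.Icc k m = Finset.range (m + 1) \ Finset.range k := by
    ext i; simp only [Finset.mem_Icc, Finset.mem_sdiff, Finset.mem_range]; omega
  rw [hs, Finset.sum_sdiff_eq_sub (Finset.range_subset_range.2 h),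
    Finset.sum_range_sub (fun i => b i), Finset.sum_range_sub (fun i => b i)]
  ring

lemma my_abel (b : ℕ → ℝ) (x : ℕ → E) (l : E) :
    ∀ n : ℕ, ∑ i ∈ Finset.Icc 1 (n + 1), b i • x i
      = b 1 • l + b (n + 1) • ((∑ i ∈ Finset.Icc 1 (n + 1), x i) - l)
        - ∑ i ∈ Finset.Icc 1 n, (b (i + 1) - b i) • ((∑ j ∈ Finset.Icc 1 i, x j) - l) := by
  intro n
  induction n with
  | zero => simp [Finset.Icc_self]; module
  | succ n ih =>
      rw [Finset.sum_Icc_succ_top (by omega : 1 ≤ n + 2), ih,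
        Finset.sum_Icc_succ_top (by omega : 1 ≤ n + 1)
          (fun i => (b (i + 1) - b i) • ((∑ j ∈ Finset.Icc 1 i, x j) - l)),
        Finset.sum_Icc_succ_top (by omega : 1 ≤ n + 2) x]
      module

lemma my_key (b : ℕ → ℝ) (x : ℕ → E) (l : E) (v : ℕ → E)
    (hbmono : Monotone b) (hbpos : ∀ n, 0 < b n)
    (hv0 : ∀ n, 0 ≤ v n) (hvant : Antitone v)
    (hebd : ∀ n, |(∑ i ∈ Finset.Icc 1 n, x i) - l| ≤ v n)
    (k n : ℕ) (hk : 1 ≤ k) (hkn : k ≤ n) :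
    |(b n)⁻¹ • ∑ i ∈ Finset.Icc 1 n, b i • x i|
      ≤ (2:ℝ) • v k + (b k / b n) • (|l| + v 1) := by
  obtain ⟨m, rfl⟩ : ∃ m, n = m + 1 := ⟨n - 1, by omega⟩
  set e : ℕ → E := fun n => (∑ i ∈ Finset.Icc 1 n, x i) - l with he
  set A : E := ∑ i ∈ Finset.Icc 1 (m + 1), b i • x i with hA
  have hbnn : ∀ j, (0:ℝ) ≤ b j := fun j => (hbpos j).le
  -- step 1 : |A| ≤ b 1 • |l| + b (m+1) • v (m+1) + ∑
  have h1 : |A| ≤ b 1 • |l| + b (m + 1) • v (m + 1)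
      + ∑ i ∈ Finset.Icc 1 m, (b (i + 1) - b i) • v i := by
    rw [hA, my_abel b x l m]
    calc |b 1 • l + b (m + 1) • e (m + 1) - ∑ i ∈ Finset.Icc 1 m, (b (i + 1) - b i) • e i|
        ≤ |b 1 • l + b (m + 1) • e (m + 1)|
          + |∑ i ∈ Finset.Icc 1 m, (b (i + 1) - b i) • e i| := by
          rw [sub_eq_add_neg]
          exact (abs_add_le _ _).trans (le_of_eq (by rw [abs_neg]))
      _ ≤ |b 1 • l| + |b (m + 1) • e (m + 1)|
          + |∑ i ∈ Finset.Icc 1 m, (b (i + 1) - b i) • e i| :=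
          add_le_add_left (abs_add_le _ _) _
      _ ≤ _ := by
          have d1 : |b 1 • l| ≤ b 1 • |l| := my_abs_smul_le _ (hbnn 1) l
          have d2 : |b (m + 1) • e (m + 1)| ≤ b (m + 1) • v (m + 1) :=
            (my_abs_smul_le _ (hbnn _) _).trans
              (smul_le_smul_of_nonneg_left (hebd _) (hbnn _))
          have d3 : |∑ i ∈ Finset.Icc 1 m, (b (i + 1) - b i) • e i|
              ≤ ∑ i ∈ Finset.Icc 1 m, (b (i + 1) - b i) • v i := by
            refine (my_abs_sum_le _ _).trans (my_sum_le_sum _ _ _ fun i hi => ?_)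
            exact (my_abs_smul_le _ (sub_nonneg.2 (hbmono (Nat.le_succ i))) _).trans
              (smul_le_smul_of_nonneg_left (hebd i) (sub_nonneg.2 (hbmono (Nat.le_succ i))))
          exact add_le_add (add_le_add d1 d2) d3
  -- step 2 : split the sum
  have hsplit : ∑ i ∈ Finset.Icc 1 m, (b (i + 1) - b i) • v i
      = (∑ i ∈ Finset.Icc 1 (k - 1), (b (i + 1) - b i) • v i)
        + ∑ i ∈ Finset.Icc k m, (b (i + 1) - b i) • v i := by
    have e1 : Finset.Icc 1 m = Finset.Ioc 0 m := by rw [← Finset.Icc_add_one_left_eq_Ioc]; rfl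
    have e2 : Finset.Icc 1 (k - 1) = Finset.Ioc 0 (k - 1) := by rw [← Finset.Icc_add_one_left_eq_Ioc]; rfl
    have e3 : Finset.Icc k m = Finset.Ioc (k - 1) m := by
      rw [← Finset.Icc_add_one_left_eq_Ioc]; congr 1; omega
    rw [e1, e2, e3, Finset.sum_Ioc_consecutive _ (by omega : 0 ≤ k - 1) (by omega : k - 1 ≤ m)]
  have h3 : ∑ i ∈ Finset.Icc 1 (k - 1), (b (i + 1) - b i) • v i ≤ (b k - b 1) • v 1 := by
    calc ∑ i ∈ Finset.Icc 1 (k - 1), (b (i + 1) - b i) • v i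
        ≤ ∑ i ∈ Finset.Icc 1 (k - 1), (b (i + 1) - b i) • v 1 := by
          refine my_sum_le_sum _ _ _ fun i hi => ?_
          exact smul_le_smul_of_nonneg_left (hvant (Finset.mem_Icc.1 hi).1)
            (sub_nonneg.2 (hbmono (Nat.le_succ i)))
      _ = (b k - b 1) • v 1 := by
          rw [← Finset.sum_smul, my_tele b 1 (k - 1) (by omega),
            show k - 1 + 1 = k from by omega]
  have h4 : ∑ i ∈ Finset.Icc k m, (b (i + 1) - b i) • v i ≤ (b (m + 1) - b k) • v k := by
    calc ∑ i ∈ Finset.Icc k m, (b (i + 1) - b i) • v i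
        ≤ ∑ i ∈ Finset.Icc k m, (b (i + 1) - b i) • v k := by
          refine my_sum_le_sum _ _ _ fun i hi => ?_
          exact smul_le_smul_of_nonneg_left (hvant (Finset.mem_Icc.1 hi).1)
            (sub_nonneg.2 (hbmono (Nat.le_succ i)))
      _ = (b (m + 1) - b k) • v k := by rw [← Finset.sum_smul, my_tele b k m (by omega)]
  have h5 : |A| ≤ b k • (|l| + v 1) + (2 * b (m + 1)) • v k := by
    have c1 : b 1 • |l| ≤ b k • |l| := my_smul_coeff_mono (hbmono hk) (abs_nonneg l)
    have c2 : b (m + 1) • v (m + 1) ≤ b (m + 1) • v k :=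
      smul_le_smul_of_nonneg_left (hvant hkn) (hbnn _)
    have c3 : (b k - b 1) • v 1 ≤ b k • v 1 :=
      my_smul_coeff_mono (by linarith [hbpos 1]) (hv0 1)
    have c4 : (b (m + 1) - b k) • v k ≤ b (m + 1) • v k :=
      my_smul_coeff_mono (by linarith [hbpos k]) (hv0 k)
    calc |A| ≤ b 1 • |l| + b (m + 1) • v (m + 1)
          + ((∑ i ∈ Finset.Icc 1 (k - 1), (b (i + 1) - b i) • v i)
            + ∑ i ∈ Finset.Icc k m, (b (i + 1) - b i) • v i) := by rw [← hsplit]; exact h1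
      _ ≤ b k • |l| + b (m + 1) • v k + ((b k • v 1) + b (m + 1) • v k) :=
          add_le_add (add_le_add c1 c2) (add_le_add (h3.trans c3) (h4.trans c4))
      _ = b k • (|l| + v 1) + (2 * b (m + 1)) • v k := by module
  -- final
  have hinv : (0:ℝ) ≤ (b (m + 1))⁻¹ := inv_nonneg.2 (hbnn _)
  calc |(b (m + 1))⁻¹ • A| ≤ (b (m + 1))⁻¹ • |A| := my_abs_smul_le _ hinv _
    _ ≤ (b (m + 1))⁻¹ • (b k • (|l| + v 1) + (2 * b (m + 1)) • v k) :=
        smul_le_smul_of_nonneg_left h5 hinv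
    _ = (2:ℝ) • v k + (b k / b (m + 1)) • (|l| + v 1) := by
        rw [smul_add, smul_smul, smul_smul, inv_mul_eq_div,
          show (b (m + 1))⁻¹ * (2 * b (m + 1)) = 2 by
            rw [mul_comm, mul_assoc, mul_inv_cancel₀ (ne_of_gt (hbpos (m + 1))), mul_one]]
        exact add_comm _ _
end

/-- Kronecker's Lemma in Riesz spaces. -/
theorem kronecker_lemma_riesz
    {E : Type*} [Lattice E] [AddCommGroup E] [Module ℝ E]
    [CovariantClass E E (· + ·) (· ≤ ·)] [PosSMulMono ℝ E]
    (harch : ∀ x : E, 0 ≤ x → IsGLB (Set.range fun n : ℕ => ((n : ℝ) + 1)⁻¹ • x) 0)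
    (x : ℕ → E) (hsum : ∃ l : E, OrderConvTo (fun n => ∑ i ∈ Finset.Icc 1 n, x i) l)
    (b : ℕ → ℝ) (hbmono : Monotone b) (hbpos : ∀ n, 0 < b n)
    (hbtop : Tendsto b atTop atTop) :
    OrderConvTo (fun n => (b n)⁻¹ • ∑ i ∈ Finset.Icc 1 n, b i • x i) 0 := by
  classical
  obtain ⟨l, v, hvdec, hvglb, hvbd⟩ := hsum
  have hv0 : ∀ n, 0 ≤ v n := fun n => hvglb.1 ⟨n, rfl⟩
  have hvant : Antitone v := antitone_nat_of_succ_le hvdec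
  have hebd : ∀ n, |(∑ i ∈ Finset.Icc 1 n, x i) - l| ≤ v n := hvbd
  set y : ℕ → E := fun n => (b n)⁻¹ • ∑ i ∈ Finset.Icc 1 n, b i • x i with hy
  set u : E := |l| + v 1 with hu
  have hu0 : (0:E) ≤ u := add_nonneg (abs_nonneg l) (hv0 1)
  have K : ∀ k n : ℕ, 1 ≤ k → k ≤ n → |y n| ≤ (2:ℝ) • v k + (b k / b n) • u :=
    fun k n hk hkn => my_key b x l v hbmono hbpos hv0 hvant hebd k n hk hkn
  have hF : ∀ k : ℕ, ∃ N : ℕ, ∀ n ≥ N, ((k:ℝ) + 1) * b (k + 1) ≤ b n := fun k =>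
    eventually_atTop.1 (hbtop.eventually_ge_atTop (((k:ℝ) + 1) * b (k + 1)))
  choose F hFspec using hF
  set N : ℕ → ℕ := fun k =>
    Nat.rec (max (F 0) 1) (fun k ih => max (ih + 1) (max (F (k + 1)) (k + 2))) k with hNdef
  have hNs : ∀ k, N (k + 1) = max (N k + 1) (max (F (k + 1)) (k + 2)) := fun k => rfl
  have hNF : ∀ k, F k ≤ N k := by
    intro k; cases k with
    | zero => exact le_max_left _ _
    | succ k => rw [hNs]; exact le_trans (le_max_left _ _) (le_max_right _ _)
  have hNk : ∀ k, k + 1 ≤ N k := by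
    intro k; cases k with
    | zero => exact le_max_right _ _
    | succ k => rw [hNs]; exact le_trans (le_max_right _ _) (le_max_right _ _)
  have hNmono : Monotone N := by
    refine monotone_nat_of_le_succ fun k => ?_
    rw [hNs]; exact le_trans (Nat.le_succ _) (le_max_left _ _)
  have hNb : ∀ k n, N k ≤ n → ((k:ℝ) + 1) * b (k + 1) ≤ b n :=
    fun k n h => hFspec k n (le_trans (hNF k) h)
  set κ : ℕ → ℕ := fun n => Nat.findGreatest (fun k => N k ≤ n) n with hκ
  set B : ℕ → E := fun k => (2:ℝ) • v (k + 1) + ((k:ℝ) + 1)⁻¹ • u with hB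
  set B' : E := (2:ℝ) • v 1 + u with hB'
  have hB0 : ∀ k, (0:E) ≤ B k := fun k =>
    add_nonneg (my_smul_nonneg' _ (by norm_num) (hv0 _))
      (my_smul_nonneg' _ (by positivity) hu0)
  have hB'0 : (0:E) ≤ B' := add_nonneg (my_smul_nonneg' _ (by norm_num) (hv0 1)) hu0
  have hBant : Antitone B := by
    refine antitone_nat_of_succ_le fun k => ?_
    refine add_le_add (smul_le_smul_of_nonneg_left (hvant (by omega)) (by norm_num)) ?_
    refine my_smul_coeff_mono ?_ hu0
    rw [inv_le_inv₀ (by positivity) (by positivity)]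
    push_cast; linarith
  have hBB' : ∀ k, B k ≤ B' := by
    intro k
    refine add_le_add (smul_le_smul_of_nonneg_left (hvant (by omega)) (by norm_num)) ?_
    calc ((k:ℝ) + 1)⁻¹ • u ≤ (1:ℝ) • u := by
          refine my_smul_coeff_mono ?_ hu0
          rw [inv_le_one_iff₀]
          right; push_cast; linarith [Nat.cast_nonneg (α := ℝ) k]
      _ = u := one_smul _ _
  set w : ℕ → E := fun n => if N 0 ≤ n then B (κ n) else B' with hw
  have hκle : ∀ n, N 0 ≤ n → N (κ n) ≤ n := fun n h =>
    Nat.findGreatest_spec (P := fun k => N k ≤ n) (m := 0) (Nat.zero_le n) h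
  have hwdec : ∀ n, w (n + 1) ≤ w n := by
    intro n
    by_cases h : N 0 ≤ n
    · have h' : N 0 ≤ n + 1 := le_trans h (Nat.le_succ n)
      have hκm : κ n ≤ κ (n + 1) := by
        refine Nat.le_findGreatest (le_trans (Nat.findGreatest_le n) (Nat.le_succ n)) ?_
        exact le_trans (hκle n h) (Nat.le_succ n)
      simp only [hw, if_pos h, if_pos h']
      exact hBant hκm
    · simp only [hw, if_neg h]
      by_cases h' : N 0 ≤ n + 1
      · simp only [if_pos h']; exact hBB' _
      · simp only [if_neg h']; exact le_rfl
  have hwbd : ∀ n, |y n| ≤ w n := by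
    intro n
    by_cases h : N 0 ≤ n
    · have hNκ : N (κ n) ≤ n := hκle n h
      have hkn : κ n + 1 ≤ n := le_trans (hNk (κ n)) hNκ
      have hcoef : b (κ n + 1) / b n ≤ ((κ n : ℝ) + 1)⁻¹ := by
        rw [div_le_iff₀ (hbpos n), inv_mul_eq_div, le_div_iff₀ (by positivity)]
        calc b (κ n + 1) * ((κ n : ℝ) + 1) = ((κ n : ℝ) + 1) * b (κ n + 1) := mul_comm _ _
          _ ≤ b n := hNb (κ n) n hNκ
      calc |y n| ≤ (2:ℝ) • v (κ n + 1) + (b (κ n + 1) / b n) • u :=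
            K (κ n + 1) n (by omega) hkn
        _ ≤ (2:ℝ) • v (κ n + 1) + ((κ n : ℝ) + 1)⁻¹ • u :=
            add_le_add_right (my_smul_coeff_mono hcoef hu0) _
        _ = w n := by simp only [hw, hB, if_pos h]
    · simp only [hw, if_neg h]
      rcases Nat.eq_zero_or_pos n with rfl | hn
      · have hy0 : y 0 = 0 := by
          simp only [hy]
          rw [Finset.Icc_eq_empty_of_lt (by omega), Finset.sum_empty, smul_zero]
        rw [hy0, abs_zero]; exact hB'0
      · have hcoef : b 1 / b n ≤ 1 := by
          rw [div_le_one (hbpos n)]; exact hbmono hn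
        calc |y n| ≤ (2:ℝ) • v 1 + (b 1 / b n) • u := K 1 n le_rfl hn
          _ ≤ (2:ℝ) • v 1 + (1:ℝ) • u :=
              add_le_add_right (my_smul_coeff_mono hcoef hu0) _
          _ = B' := by rw [one_smul]
  have hw0 : ∀ n, (0:E) ≤ w n := by
    intro n; simp only [hw]
    split
    · exact hB0 _
    · exact hB'0
  have hglb : IsGLB (Set.range w) 0 := by
    constructor
    · rintro z ⟨n, rfl⟩; exact hw0 n
    · rintro c hc
      have hcB : ∀ k, c ≤ B k := by
        intro k
        have h1 : N 0 ≤ N k := hNmono (Nat.zero_le k)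
        have h2 : k ≤ κ (N k) :=
          Nat.le_findGreatest ((Nat.le_succ k).trans (hNk k)) le_rfl
        have h3 : c ≤ w (N k) := hc ⟨N k, rfl⟩
        simp only [hw, if_pos h1] at h3
        exact h3.trans (hBant h2)
      have hstep : ∀ j : ℕ, c ≤ ((j:ℝ) + 1)⁻¹ • u := by
        intro j
        have hlb : ∀ m, (2:ℝ)⁻¹ • (c - ((j:ℝ) + 1)⁻¹ • u) ≤ v m := by
          intro m
          have h1 : c ≤ (2:ℝ) • v (max j m + 1) + (((max j m : ℕ) : ℝ) + 1)⁻¹ • u := hcB (max j m)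
          have h2 : (2:ℝ) • v (max j m + 1) ≤ (2:ℝ) • v m :=
            smul_le_smul_of_nonneg_left (hvant (by omega)) (by norm_num)
          have h3 : (((max j m : ℕ) : ℝ) + 1)⁻¹ • u ≤ ((j:ℝ) + 1)⁻¹ • u := by
            refine my_smul_coeff_mono ?_ hu0
            rw [inv_le_inv₀ (by positivity) (by positivity)]
            have : (j:ℝ) ≤ ((max j m : ℕ) : ℝ) := Nat.cast_le.2 (le_max_left j m)
            linarith
          have h4 : c - ((j:ℝ) + 1)⁻¹ • u ≤ (2:ℝ) • v m := by
            rw [sub_le_iff_le_add]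
            calc c ≤ (2:ℝ) • v (max j m + 1) + (((max j m : ℕ) : ℝ) + 1)⁻¹ • u := h1
              _ ≤ (2:ℝ) • v m + ((j:ℝ) + 1)⁻¹ • u := add_le_add h2 h3
          calc (2:ℝ)⁻¹ • (c - ((j:ℝ) + 1)⁻¹ • u) ≤ (2:ℝ)⁻¹ • ((2:ℝ) • v m) :=
              smul_le_smul_of_nonneg_left h4 (by norm_num)
            _ = v m := by rw [smul_smul]; norm_num
        have h5 : (2:ℝ)⁻¹ • (c - ((j:ℝ) + 1)⁻¹ • u) ≤ 0 :=
          hvglb.2 (by rintro z ⟨m, rfl⟩; exact hlb m)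
        have h6 := smul_le_smul_of_nonneg_left h5 (by norm_num : (0:ℝ) ≤ 2)
        rw [smul_smul, smul_zero, show (2:ℝ) * 2⁻¹ = 1 by norm_num, one_smul] at h6
        exact sub_nonpos.1 h6
      exact (harch u hu0).2 (by rintro z ⟨j, rfl⟩; exact hstep j)
  exact ⟨w, hwdec, hglb, fun n => by rw [sub_zero]; exact hwbd n⟩
end

section
/- Conditional Hölder inequality for sums: let (Ω, ℱ, μ) be a probability space, let m be a sub-σ-algebra of ℱ, let p, q be real numbers with 1 < p < ∞, 1 < q < ∞ and 1/p + 1/q = 1, and let n ∈ ℕ. Let x_1, …, x_n be measurable functions with each |x_i|^p integrable, and y_1, …, y_n measurable functions with each |y_i|^q integrable. Then each product x_i·y_i is integrable, and almost everywhere Σ_{i=1}^n E[|x_i y_i| | m] ≤ (Σ_{i=1}^n E[|x_i|^p | m])^{1/p} · (Σ_{i=1}^n E[|y_i|^q | m])^{1/q}. -/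
open MeasureTheory Filter Topology

private lemma young_scaled {p q a b c : ℝ} (hpq : Real.HolderConjugate p q)
    (ha : 0 ≤ a) (hb : 0 ≤ b) (hc : 0 < c) :
    a * b ≤ c ^ p / p * a ^ p + c ^ (-q) / q * b ^ q := by
  have h := Real.young_inequality_of_nonneg (mul_nonneg hc.le ha)
    (div_nonneg hb hc.le) hpq
  have h1 : (c * a) ^ p = c ^ p * a ^ p := Real.mul_rpow hc.le ha
  have h2 : (b / c) ^ q = c ^ (-q) * b ^ q := by
    rw [Real.div_rpow hb hc.le, Real.rpow_neg hc.le, div_eq_mul_inv, mul_comm]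
  have h3 : c * a * (b / c) = a * b := by field_simp
  rw [h3, h1, h2] at h
  calc a * b ≤ c ^ p * a ^ p / p + c ^ (-q) * b ^ q / q := h
    _ = c ^ p / p * a ^ p + c ^ (-q) / q * b ^ q := by ring

private lemma le_rpow_mul_of_forall_rat {p q A B E : ℝ} (hpq : Real.HolderConjugate p q)
    (hA : 0 ≤ A) (hB : 0 ≤ B)
    (h : ∀ c : ℚ, 0 < c → E ≤ (c : ℝ) ^ p / p * A + (c : ℝ) ^ (-q) / q * B) :
    E ≤ A ^ (1 / p) * B ^ (1 / q) := by
  have hp0 : 0 < p := hpq.pos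
  have hq0 : 0 < q := hpq.symm.pos
  -- extend to all real `c > 0`
  have hre : ∀ c : ℝ, 0 < c → E ≤ c ^ p / p * A + c ^ (-q) / q * B := by
    intro c hc
    choose u hu1 hu2 using fun n : ℕ =>
      exists_rat_btwn (lt_add_of_pos_right c (by positivity : (0:ℝ) < 1 / (n + 1)))
    have hu0 : ∀ n, (0:ℚ) < u n := fun n => by
      have : (0:ℝ) < (u n : ℝ) := hc.trans (hu1 n)
      exact_mod_cast this
    have htend : Tendsto (fun n => (u n : ℝ)) atTop (𝓝 c) := by
      have h2 : Tendsto (fun n : ℕ => c + 1 / ((n : ℝ) + 1)) atTop (𝓝 c) := by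
        simpa using (tendsto_const_nhds (x := c)).add tendsto_one_div_add_atTop_nhds_zero_nat
      exact tendsto_of_tendsto_of_tendsto_of_le_of_le tendsto_const_nhds h2
        (fun n => (hu1 n).le) (fun n => (hu2 n).le)
    have hcont : Tendsto (fun n => (u n : ℝ) ^ p / p * A + (u n : ℝ) ^ (-q) / q * B)
        atTop (𝓝 (c ^ p / p * A + c ^ (-q) / q * B)) := by
      have t1 := (Real.continuousAt_rpow_const c p (Or.inl hc.ne')).tendsto.comp htend
      have t2 := (Real.continuousAt_rpow_const c (-q) (Or.inl hc.ne')).tendsto.comp htend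
      exact ((t1.div_const p).mul_const A).add ((t2.div_const q).mul_const B)
    exact ge_of_tendsto hcont (Eventually.of_forall fun n => h (u n) (hu0 n))
  have hn : Tendsto (fun n : ℕ => (n : ℝ) + 1) atTop atTop :=
    tendsto_atTop_add_const_right _ 1 tendsto_natCast_atTop_atTop
  rcases eq_or_lt_of_le hA with hA0 | hApos
  · -- A = 0
    have hE : E ≤ 0 := by
      have hmain : Tendsto (fun n : ℕ => ((n : ℝ) + 1) ^ p / p * A + ((n : ℝ) + 1) ^ (-q) / q * B)
          atTop (𝓝 0) := by
        have t2 := (tendsto_rpow_neg_atTop hq0).comp hn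
        rw [← hA0]
        simpa using ((t2.div_const q).mul_const B).const_add 0
      exact ge_of_tendsto hmain (Eventually.of_forall fun n => hre _ (by positivity))
    rw [← hA0, Real.zero_rpow (ne_of_gt hpq.one_div_pos), zero_mul]
    exact hE
  rcases eq_or_lt_of_le hB with hB0 | hBpos
  · -- B = 0
    have hE : E ≤ 0 := by
      have heq : ∀ n : ℕ, (((n : ℝ) + 1)⁻¹) ^ p = ((n : ℝ) + 1) ^ (-p) := fun n => by
        rw [Real.inv_rpow (by positivity), Real.rpow_neg (by positivity)]
      have hmain : Tendsto
          (fun n : ℕ => (((n : ℝ) + 1)⁻¹) ^ p / p * A + (((n : ℝ) + 1)⁻¹) ^ (-q) / q * B)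
          atTop (𝓝 0) := by
        have t1 := (tendsto_rpow_neg_atTop hp0).comp hn
        rw [← hB0]
        simp only [mul_zero, add_zero]
        simp_rw [heq]
        simpa using (t1.div_const p).mul_const A
      exact ge_of_tendsto hmain (Eventually.of_forall fun n => hre _ (by positivity))
    rw [← hB0, Real.zero_rpow (ne_of_gt hpq.symm.one_div_pos), mul_zero]
    exact hE
  · -- A > 0, B > 0
    have hBA : (0:ℝ) < B / A := div_pos hBpos hApos
    set c : ℝ := (B / A) ^ (1 / (p + q)) with hc_def
    have hcpos : 0 < c := Real.rpow_pos_of_pos hBA _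
    have key := hre c hcpos
    have hmul : p * q = p + q := hpq.mul_eq_add
    have hsum : (0:ℝ) < p + q := by positivity
    have hconj : 1 / p + 1 / q = 1 := by
      rw [one_div, one_div]; exact hpq.inv_add_inv_eq_one
    have e1 : (1 / (p + q)) * p = 1 / q := by
      rw [← hmul]; field_simp
    have e2 : (1 / (p + q)) * (-q) = -(1 / p) := by
      rw [← hmul]; field_simp
    have h1 : c ^ p = B ^ (1 / q) * A ^ (-(1 / q)) := by
      rw [hc_def, ← Real.rpow_mul hBA.le, e1, Real.div_rpow hB hA,
        div_eq_mul_inv, ← Real.rpow_neg hA]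
    have h2 : c ^ (-q) = B ^ (-(1 / p)) * A ^ (1 / p) := by
      rw [hc_def, ← Real.rpow_mul hBA.le, e2, Real.rpow_neg hBA.le,
        ← Real.inv_rpow hBA.le, inv_div, Real.div_rpow hA hB,
        div_eq_mul_inv, ← Real.rpow_neg hB, mul_comm]
    have hA1 : A ^ (-(1 / q)) * A = A ^ (1 / p) := by
      nth_rewrite 2 [← Real.rpow_one A]
      rw [← Real.rpow_add hApos]
      congr 1; linarith
    have hB1 : B ^ (-(1 / p)) * B = B ^ (1 / q) := by
      nth_rewrite 2 [← Real.rpow_one B]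
      rw [← Real.rpow_add hBpos]
      congr 1; linarith
    have hfinal : c ^ p / p * A + c ^ (-q) / q * B = A ^ (1 / p) * B ^ (1 / q) := by
      rw [h1, h2]
      have : B ^ (1 / q) * A ^ (-(1 / q)) / p * A + B ^ (-(1 / p)) * A ^ (1 / p) / q * B
          = (A ^ (-(1 / q)) * A) * B ^ (1 / q) * (1 / p)
            + (B ^ (-(1 / p)) * B) * A ^ (1 / p) * (1 / q) := by ring
      rw [this, hA1, hB1]
      calc A ^ (1 / p) * B ^ (1 / q) * (1 / p) + B ^ (1 / q) * A ^ (1 / p) * (1 / q)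
          = A ^ (1 / p) * B ^ (1 / q) * (1 / p + 1 / q) := by ring
        _ = A ^ (1 / p) * B ^ (1 / q) := by rw [hconj, mul_one]
    linarith [key, hfinal.le, hfinal.ge]

/-- Conditional Hölder inequality for sums. -/
theorem condexp_holder_sums {Ω : Type*} {m m0 : MeasurableSpace Ω} (μ : Measure Ω)
    [IsProbabilityMeasure μ] (hm : m ≤ m0)
    (p q : ℝ) (hp : 1 < p) (hq : 1 < q) (hpq : 1 / p + 1 / q = 1)
    (n : ℕ) (x y : Fin n → Ω → ℝ)
    (hxm : ∀ i, Measurable (x i)) (hym : ∀ i, Measurable (y i))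
    (hxi : ∀ i, Integrable (fun ω => |x i ω| ^ p) μ)
    (hyi : ∀ i, Integrable (fun ω => |y i ω| ^ q) μ) :
    (∀ i, Integrable (fun ω => x i ω * y i ω) μ) ∧
      ∀ᵐ ω ∂μ,
        ∑ i, (μ[fun ω => |x i ω * y i ω| | m]) ω ≤
          (∑ i, (μ[fun ω => |x i ω| ^ p | m]) ω) ^ (1 / p) *
            (∑ i, (μ[fun ω => |y i ω| ^ q | m]) ω) ^ (1 / q) := by
  have hpq' : Real.HolderConjugate p q := Real.holderConjugate_iff.mpr ⟨hp, by rw [inv_eq_one_div, inv_eq_one_div]; exact hpq⟩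
  -- integrability of the products
  have hxyint : ∀ i, Integrable (fun ω => x i ω * y i ω) μ := by
    intro i
    refine (((hxi i).div_const p).add ((hyi i).div_const q)).mono
      (((hxm i).mul (hym i)).aestronglyMeasurable) (Eventually.of_forall fun ω => ?_)
    rw [Real.norm_eq_abs, Real.norm_eq_abs, abs_mul]
    exact (Real.young_inequality_of_nonneg (abs_nonneg (x i ω)) (abs_nonneg (y i ω))
      hpq').trans (le_abs_self _)
  refine ⟨hxyint, ?_⟩
  -- conditional expectation estimate, for each i and each positive rational c
  have key : ∀ i, ∀ c : ℚ, 0 < c →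
      μ[fun ω => |x i ω * y i ω| | m] ≤ᵐ[μ]
        ((c : ℝ) ^ p / p) • μ[fun ω => |x i ω| ^ p | m]
          + ((c : ℝ) ^ (-q) / q) • μ[fun ω => |y i ω| ^ q | m] := by
    intro i c hc
    have hc' : (0:ℝ) < (c : ℝ) := by exact_mod_cast hc
    have e0 : μ[fun ω => |x i ω * y i ω| | m] ≤ᵐ[μ]
        μ[((c : ℝ) ^ p / p) • (fun ω => |x i ω| ^ p)
          + ((c : ℝ) ^ (-q) / q) • (fun ω => |y i ω| ^ q) | m] := by
      refine condExp_mono (hxyint i).abs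
        (((hxi i).smul _).add ((hyi i).smul _))
        (Eventually.of_forall fun ω => ?_)
      simp only [Pi.add_apply, Pi.smul_apply, smul_eq_mul]
      rw [abs_mul]
      exact young_scaled hpq' (abs_nonneg (x i ω)) (abs_nonneg (y i ω)) hc'
    refine e0.trans ((condExp_add ((hxi i).smul _) ((hyi i).smul _) m).trans
      (EventuallyEq.add (condExp_smul _ _ m) (condExp_smul _ _ m))).le
  have h1 : ∀ᵐ ω ∂μ, ∀ i, ∀ c : ℚ, 0 < c →
      (μ[fun ω => |x i ω * y i ω| | m]) ω ≤
        (c : ℝ) ^ p / p * (μ[fun ω => |x i ω| ^ p | m]) ω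
          + (c : ℝ) ^ (-q) / q * (μ[fun ω => |y i ω| ^ q | m]) ω := by
    rw [ae_all_iff]
    intro i
    rw [ae_all_iff]
    intro c
    by_cases hc : 0 < c
    · filter_upwards [key i c hc] with ω hω _
      simpa [smul_eq_mul] using hω
    · filter_upwards with ω hc'
      exact absurd hc' hc
  have h2 : ∀ᵐ ω ∂μ, ∀ i, 0 ≤ (μ[fun ω => |x i ω| ^ p | m]) ω := by
    rw [ae_all_iff]
    intro i
    filter_upwards [condExp_nonneg (μ := μ) (m := m)
      (Eventually.of_forall fun ω => Real.rpow_nonneg (abs_nonneg (x i ω)) p)] with ω hω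
    exact hω
  have h3 : ∀ᵐ ω ∂μ, ∀ i, 0 ≤ (μ[fun ω => |y i ω| ^ q | m]) ω := by
    rw [ae_all_iff]
    intro i
    filter_upwards [condExp_nonneg (μ := μ) (m := m)
      (Eventually.of_forall fun ω => Real.rpow_nonneg (abs_nonneg (y i ω)) q)] with ω hω
    exact hω
  filter_upwards [h1, h2, h3] with ω hω hA hB
  calc ∑ i, (μ[fun ω => |x i ω * y i ω| | m]) ω
      ≤ ∑ i, ((μ[fun ω => |x i ω| ^ p | m]) ω) ^ (1 / p)
          * ((μ[fun ω => |y i ω| ^ q | m]) ω) ^ (1 / q) :=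
        Finset.sum_le_sum fun i _ =>
          le_rpow_mul_of_forall_rat hpq' (hA i) (hB i) (hω i)
    _ ≤ (∑ i, (((μ[fun ω => |x i ω| ^ p | m]) ω) ^ (1 / p)) ^ p) ^ (1 / p)
          * (∑ i, (((μ[fun ω => |y i ω| ^ q | m]) ω) ^ (1 / q)) ^ q) ^ (1 / q) :=
        Real.inner_le_Lp_mul_Lq_of_nonneg _ hpq'
          (fun i _ => Real.rpow_nonneg (hA i) _) (fun i _ => Real.rpow_nonneg (hB i) _)
    _ = (∑ i, (μ[fun ω => |x i ω| ^ p | m]) ω) ^ (1 / p)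
          * (∑ i, (μ[fun ω => |y i ω| ^ q | m]) ω) ^ (1 / q) := by
        congr 2
        · exact Finset.sum_congr rfl fun i _ => by
            rw [one_div, Real.rpow_inv_rpow (hA i) hpq'.ne_zero]
        · exact Finset.sum_congr rfl fun i _ => by
            rw [one_div, Real.rpow_inv_rpow (hB i) hpq'.symm.ne_zero]
end

section
/- Hájek–Rényi–Chow maximal inequality (conditional form): let (Ω, ℱ, μ) be a probability space with a filtration (ℱ_i)_{i ≥ 1}, and let (Y_i)_{i ≥ 1} be a submartingale with respect to (ℱ_i). Let (a_i)_{i ≥ 1} be a non-decreasing sequence of positive real numbers, and let g : Ω → ℝ be a nonnegative, integrable, ℱ_1-measurable function. Then for every n ≥ 1, almost everywhere: E[ g · 1_{{∃ i, 1 ≤ i ≤ n, Y_i ≥ a_i · g}} | ℱ_1 ] ≤ Y_1⁺ / a_1 + Σ_{i=1}^{n−1} E[ Y_{i+1}⁺ − Y_i⁺ | ℱ_1 ] / a_{i+1}. -/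
open MeasureTheory Filter

/-- The Hájek–Rényi–Chow maximal inequality, conditional form. -/
theorem hajek_renyi_chow_maximal_inequality_condexp
    {Ω : Type*} {m0 : MeasurableSpace Ω} {μ : Measure Ω} [IsProbabilityMeasure μ]
    (ℱ : Filtration ℕ m0) (Y : ℕ → Ω → ℝ)
    (hadp : ∀ i, 1 ≤ i → StronglyMeasurable[ℱ i] (Y i))
    (hint : ∀ i, 1 ≤ i → Integrable (Y i) μ)
    (hsub : ∀ i j, 1 ≤ i → i ≤ j → Y i ≤ᵐ[μ] μ[Y j | ℱ i])
    (a : ℕ → ℝ) (hapos : ∀ i, 1 ≤ i → 0 < a i)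
    (hamono : ∀ i j, 1 ≤ i → i ≤ j → a i ≤ a j)
    (g : Ω → ℝ) (hg0 : ∀ ω, 0 ≤ g ω) (hgi : Integrable g μ)
    (hgm : StronglyMeasurable[ℱ 1] g)
    (n : ℕ) (hn : 1 ≤ n) :
    ∀ᵐ ω ∂μ,
      (μ[fun ω => g ω *
          Set.indicator {ω | ∃ i, 1 ≤ i ∧ i ≤ n ∧ a i * g ω ≤ Y i ω} (fun _ => (1 : ℝ)) ω
        | ℱ 1]) ω ≤
        max (Y 1 ω) 0 / a 1 +
          ∑ i ∈ Finset.Ico 1 n,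
            (μ[fun ω => max (Y (i + 1) ω) 0 - max (Y i ω) 0 | ℱ 1]) ω / a (i + 1) := by
  classical
  -- notation
  set C : ℕ → Set Ω := fun k => {ω | ∃ i, 1 ≤ i ∧ i ≤ k ∧ a i * g ω ≤ Y i ω} with hCdef
  -- integrability of the positive parts
  have hXint : ∀ i, 1 ≤ i → Integrable (fun ω => max (Y i ω) 0) μ :=
    fun i hi => (hint i hi).pos_part
  have hXm : ∀ i, 1 ≤ i → StronglyMeasurable[ℱ i] (fun ω => max (Y i ω) 0) :=
    fun i hi => @StronglyMeasurable.sup Ω ℝ (Y i) (fun _ => 0) (ℱ i) _ _ _ (hadp i hi)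
      stronglyMeasurable_const
  -- measurability of the sets C k
  have hCm : ∀ k, MeasurableSet[ℱ k] (C k) := by
    intro k
    have : C k = ⋃ i ∈ Finset.Icc 1 k, {ω | a i * g ω ≤ Y i ω} := by
      ext ω
      simp only [hCdef, Set.mem_setOf_eq, Set.mem_iUnion, Finset.mem_Icc, exists_prop]
      tauto
    rw [this]
    refine (Finset.Icc 1 k).measurableSet_biUnion ?_
    intro i hi
    rw [Finset.mem_Icc] at hi
    have hg' : Measurable[ℱ k] g := (hgm.mono (ℱ.mono (hi.1.trans hi.2))).measurable
    have hY' : Measurable[ℱ k] (Y i) := ((hadp i hi.1).mono (ℱ.mono hi.2)).measurable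
    exact measurableSet_le (measurable_const.mul hg') hY'
  -- the positive part is a submartingale (for consecutive times)
  have hXsub : ∀ k, 1 ≤ k →
      0 ≤ᵐ[μ] μ[fun ω => max (Y (k + 1) ω) 0 - max (Y k ω) 0 | ℱ k] := by
    intro k hk
    have hk1 : 1 ≤ k + 1 := le_trans hk (Nat.le_succ k)
    have hmono : μ[Y (k + 1) | ℱ k] ≤ᵐ[μ] μ[fun ω => max (Y (k + 1) ω) 0 | ℱ k] :=
      condExp_mono (hint (k + 1) hk1) (hXint (k + 1) hk1)
        (Filter.Eventually.of_forall fun ω => le_max_left _ _)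
    have hnn : 0 ≤ᵐ[μ] μ[fun ω => max (Y (k + 1) ω) 0 | ℱ k] :=
      condExp_nonneg (Filter.Eventually.of_forall fun ω => le_max_right _ _)
    have h1 : (fun ω => max (Y k ω) 0) ≤ᵐ[μ] μ[fun ω => max (Y (k + 1) ω) 0 | ℱ k] := by
      filter_upwards [hsub k (k + 1) hk (Nat.le_succ k), hmono, hnn] with ω ha hb hc
      exact max_le (le_trans ha hb) hc
    have h2 : μ[fun ω => max (Y (k + 1) ω) 0 - max (Y k ω) 0 | ℱ k]
        =ᵐ[μ] μ[fun ω => max (Y (k + 1) ω) 0 | ℱ k] - μ[fun ω => max (Y k ω) 0 | ℱ k] :=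
      condExp_sub (hXint (k + 1) hk1) (hXint k hk) _
    have h3 : μ[fun ω => max (Y k ω) 0 | ℱ k] = fun ω => max (Y k ω) 0 :=
      condExp_of_stronglyMeasurable (ℱ.le k) (hXm k hk) (hXint k hk)
    filter_upwards [h1, h2] with ω hω1 hω2
    rw [hω2, Pi.sub_apply, h3]
    simpa using hω1
  -- integrability of the process W k
  have hWint : ∀ k, 1 ≤ k → Integrable
      (fun ω => (C k).indicator g ω + (C k)ᶜ.indicator (fun ω => max (Y k ω) 0 / a k) ω) μ :=
    fun k hk => (hgi.indicator ((ℱ.le k) _ (hCm k))).add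
      (((hXint k hk).div_const (a k)).indicator (((ℱ.le k) _ (hCm k)).compl)
        : Integrable ((C k)ᶜ.indicator fun ω => max (Y k ω) 0 / a k) μ)
  -- main induction
  have key : ∀ k, 1 ≤ k → ∀ᵐ ω ∂μ,
      (μ[fun ω => (C k).indicator g ω +
          (C k)ᶜ.indicator (fun ω => max (Y k ω) 0 / a k) ω | ℱ 1]) ω ≤
        max (Y 1 ω) 0 / a 1 +
          ∑ i ∈ Finset.Ico 1 k,
            (μ[fun ω => max (Y (i + 1) ω) 0 - max (Y i ω) 0 | ℱ 1]) ω / a (i + 1) := by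
    intro k hk
    induction k, hk using Nat.le_induction with
    | base =>
      have hle : (fun ω => (C 1).indicator g ω +
            (C 1)ᶜ.indicator (fun ω => max (Y 1 ω) 0 / a 1) ω)
          ≤ᵐ[μ] fun ω => max (Y 1 ω) 0 / a 1 := by
        refine Filter.Eventually.of_forall fun ω => ?_
        show (C 1).indicator g ω + (C 1)ᶜ.indicator (fun ω => max (Y 1 ω) 0 / a 1) ω ≤
          max (Y 1 ω) 0 / a 1
        by_cases h : ω ∈ C 1
        · rw [Set.indicator_of_mem h, Set.indicator_of_notMem (by simpa using h), add_zero]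
          obtain ⟨i, hi1, hi2, hi3⟩ := h
          have : i = 1 := le_antisymm hi2 hi1
          subst this
          rw [le_div_iff₀ (hapos 1 le_rfl)]
          calc g ω * a 1 = a 1 * g ω := mul_comm _ _
            _ ≤ Y 1 ω := hi3
            _ ≤ max (Y 1 ω) 0 := le_max_left _ _
        · rw [Set.indicator_of_notMem h, Set.indicator_of_mem (by simpa using h), zero_add]
      have hrhsm : StronglyMeasurable[ℱ 1] (fun ω => max (Y 1 ω) 0 / a 1) := by
        simp only [div_eq_mul_inv]
        exact (hXm 1 le_rfl).mul stronglyMeasurable_const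
      have hrhsi : Integrable (fun ω => max (Y 1 ω) 0 / a 1) μ :=
        (hXint 1 le_rfl).div_const (a 1)
      have h := condExp_mono (m := ℱ 1) (hWint 1 le_rfl) hrhsi hle
      rw [condExp_of_stronglyMeasurable (ℱ.le 1) hrhsm hrhsi] at h
      filter_upwards [h] with ω hω
      simpa using hω
    | succ k hk ih =>
      have hk1 : 1 ≤ k + 1 := le_trans hk (Nat.le_succ k)
      have hak := hapos k hk
      have hak1 := hapos (k + 1) hk1
      have ham := hamono k (k + 1) hk (Nat.le_succ k)
      -- the increment function
      set f : Ω → ℝ := fun ω => (max (Y (k + 1) ω) 0 - max (Y k ω) 0) / a (k + 1) with hfdef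
      have hfint : Integrable f μ :=
        ((hXint (k + 1) hk1).sub (hXint k hk)).div_const (a (k + 1))
      -- pointwise bound : W (k+1) ≤ W k + 1_{(C k)ᶜ} f
      have hdivmono : ∀ ω, max (Y k ω) 0 / a (k + 1) ≤ max (Y k ω) 0 / a k := by
        intro ω
        rw [div_le_div_iff₀ hak1 hak]
        exact mul_le_mul_of_nonneg_left ham (le_max_right _ _)
      have harith : ∀ ω, max (Y (k + 1) ω) 0 / a (k + 1) ≤
          max (Y k ω) 0 / a k + f ω := by
        intro ω
        have e1 : max (Y (k + 1) ω) 0 / a (k + 1)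
            = max (Y k ω) 0 / a (k + 1) + f ω := by
          rw [hfdef]; ring
        rw [e1]
        exact add_le_add_left (hdivmono ω) _
      have hW : ∀ ω,
          (C (k + 1)).indicator g ω +
            (C (k + 1))ᶜ.indicator (fun ω => max (Y (k + 1) ω) 0 / a (k + 1)) ω ≤
          ((C k).indicator g ω +
            (C k)ᶜ.indicator (fun ω => max (Y k ω) 0 / a k) ω) +
            (C k)ᶜ.indicator f ω := by
        intro ω
        by_cases h1 : ω ∈ C k
        · have h2 : ω ∈ C (k + 1) := by
            obtain ⟨i, hi1, hi2, hi3⟩ := h1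
            exact ⟨i, hi1, le_trans hi2 (Nat.le_succ k), hi3⟩
          rw [Set.indicator_of_mem h2, Set.indicator_of_notMem (by simpa using h2),
            Set.indicator_of_mem h1, Set.indicator_of_notMem (by simpa using h1),
            Set.indicator_of_notMem (by simpa using h1)]
          simp
        · by_cases h2 : ω ∈ C (k + 1)
          · have hgle : a (k + 1) * g ω ≤ Y (k + 1) ω := by
              obtain ⟨i, hi1, hi2, hi3⟩ := h2
              have hik : i = k + 1 := by
                by_contra hne
                exact h1 ⟨i, hi1, by omega, hi3⟩
              rw [hik] at hi3; exact hi3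
            rw [Set.indicator_of_mem h2, Set.indicator_of_notMem (by simpa using h2),
              Set.indicator_of_notMem h1, Set.indicator_of_mem (by simpa using h1),
              Set.indicator_of_mem (by simpa using h1)]
            have hg' : g ω ≤ max (Y (k + 1) ω) 0 / a (k + 1) := by
              rw [le_div_iff₀ hak1]
              calc g ω * a (k + 1) = a (k + 1) * g ω := mul_comm _ _
                _ ≤ Y (k + 1) ω := hgle
                _ ≤ max (Y (k + 1) ω) 0 := le_max_left _ _
            have := harith ω
            linarith
          · rw [Set.indicator_of_notMem h2, Set.indicator_of_mem (by simpa using h2),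
              Set.indicator_of_notMem h1, Set.indicator_of_mem (by simpa using h1),
              Set.indicator_of_mem (by simpa using h1)]
            have := harith ω
            linarith
      -- bound the conditional expectation of the indicator term
      have hindint : Integrable ((C k)ᶜ.indicator f) μ :=
        hfint.indicator (((ℱ.le k) _ (hCm k)).compl)
      -- f = c • h where h is the increment
      have hfc : f = (a (k + 1))⁻¹ • (fun ω => max (Y (k + 1) ω) 0 - max (Y k ω) 0) := by
        funext ω; simp [hfdef, div_eq_inv_mul]
      have hhint : Integrable (fun ω => max (Y (k + 1) ω) 0 - max (Y k ω) 0) μ :=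
        (hXint (k + 1) hk1).sub (hXint k hk)
      have hfnnk : 0 ≤ᵐ[μ] μ[f | ℱ k] := by
        rw [hfc]
        filter_upwards [condExp_smul (μ := μ) (m := ℱ k) (a (k + 1))⁻¹
          (fun ω => max (Y (k + 1) ω) 0 - max (Y k ω) 0), hXsub k hk] with ω hω1 hω2
        rw [hω1]
        simpa using mul_nonneg (inv_nonneg.2 (le_of_lt hak1)) hω2
      -- tower property chain
      have t1 : μ[(C k)ᶜ.indicator f | ℱ 1]
          =ᵐ[μ] μ[μ[(C k)ᶜ.indicator f | ℱ k] | ℱ 1] :=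
        (condExp_condExp_of_le (ℱ.mono hk) (ℱ.le k)).symm
      have t2 : μ[(C k)ᶜ.indicator f | ℱ k] =ᵐ[μ] (C k)ᶜ.indicator (μ[f | ℱ k]) :=
        condExp_indicator hfint (hCm k).compl
      have t3 : (C k)ᶜ.indicator (μ[f | ℱ k]) ≤ᵐ[μ] μ[f | ℱ k] := by
        filter_upwards [hfnnk] with ω hω
        by_cases h : ω ∈ (C k)ᶜ
        · rw [Set.indicator_of_mem h]
        · rw [Set.indicator_of_notMem h]; exact hω
      have t4 : μ[(C k)ᶜ.indicator (μ[f | ℱ k]) | ℱ 1] ≤ᵐ[μ] μ[μ[f | ℱ k] | ℱ 1] :=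
        condExp_mono (integrable_condExp.indicator (((ℱ.le k) _ (hCm k)).compl))
          integrable_condExp t3
      have t5 : μ[μ[f | ℱ k] | ℱ 1] =ᵐ[μ] μ[f | ℱ 1] :=
        condExp_condExp_of_le (ℱ.mono hk) (ℱ.le k)
      have t6 : μ[(C k)ᶜ.indicator f | ℱ 1] ≤ᵐ[μ] μ[f | ℱ 1] := by
        filter_upwards [t1, condExp_congr_ae (m := ℱ 1) t2, t4, t5] with ω h1 h2 h3 h4
        rw [h1, h2]
        exact le_trans h3 (le_of_eq h4)
      -- identify μ[f|ℱ1]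
      have t7 : μ[f | ℱ 1] =ᵐ[μ]
          fun ω => (μ[fun ω => max (Y (k + 1) ω) 0 - max (Y k ω) 0 | ℱ 1]) ω / a (k + 1) := by
        rw [hfc]
        filter_upwards [condExp_smul (μ := μ) (m := ℱ 1) (a (k + 1))⁻¹
          (fun ω => max (Y (k + 1) ω) 0 - max (Y k ω) 0)] with ω hω
        rw [hω]
        simp [div_eq_inv_mul]
      -- conditional expectation monotone on pointwise bound
      have hmono1 : μ[fun ω => (C (k + 1)).indicator g ω +
            (C (k + 1))ᶜ.indicator (fun ω => max (Y (k + 1) ω) 0 / a (k + 1)) ω | ℱ 1]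
          ≤ᵐ[μ] μ[fun ω => ((C k).indicator g ω +
            (C k)ᶜ.indicator (fun ω => max (Y k ω) 0 / a k) ω) +
            (C k)ᶜ.indicator f ω | ℱ 1] :=
        condExp_mono (hWint (k + 1) hk1) ((hWint k hk).add hindint)
          (Filter.Eventually.of_forall hW)
      have hadd : μ[fun ω => ((C k).indicator g ω +
            (C k)ᶜ.indicator (fun ω => max (Y k ω) 0 / a k) ω) +
            (C k)ᶜ.indicator f ω | ℱ 1]
          =ᵐ[μ] μ[fun ω => (C k).indicator g ω +
            (C k)ᶜ.indicator (fun ω => max (Y k ω) 0 / a k) ω | ℱ 1] +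
            μ[(C k)ᶜ.indicator f | ℱ 1] :=
        condExp_add (hWint k hk) hindint _
      -- sum splitting
      filter_upwards [ih, hmono1, hadd, t6, t7] with ω hih hω1 hω2 hω3 hω4
      rw [Finset.sum_Ico_succ_top hk]
      have := le_trans hω1 (le_of_eq hω2)
      rw [Pi.add_apply] at this
      have h5 : (μ[(C k)ᶜ.indicator f | ℱ 1]) ω ≤
          (μ[fun ω => max (Y (k + 1) ω) 0 - max (Y k ω) 0 | ℱ 1]) ω / a (k + 1) := by
        rw [← hω4]; exact hω3
      linarith
  -- conclude
  have hfun : (fun ω => g ω *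
      Set.indicator {ω | ∃ i, 1 ≤ i ∧ i ≤ n ∧ a i * g ω ≤ Y i ω} (fun _ => (1 : ℝ)) ω)
      = (C n).indicator g := by
    funext ω
    by_cases h : ω ∈ C n
    · rw [Set.indicator_of_mem h]
      rw [Set.indicator_of_mem (by exact h), mul_one]
    · rw [Set.indicator_of_notMem h]
      rw [Set.indicator_of_notMem (by exact h), mul_zero]
  have hle : (C n).indicator g ≤ᵐ[μ] fun ω => (C n).indicator g ω +
      (C n)ᶜ.indicator (fun ω => max (Y n ω) 0 / a n) ω := by
    refine Filter.Eventually.of_forall fun ω => ?_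
    refine le_add_of_nonneg_right (Set.indicator_nonneg ?_ ω)
    intro x _
    exact div_nonneg (le_max_right _ _) (le_of_lt (hapos n hn))
  have hmono2 : μ[(C n).indicator g | ℱ 1] ≤ᵐ[μ] μ[fun ω => (C n).indicator g ω +
      (C n)ᶜ.indicator (fun ω => max (Y n ω) 0 / a n) ω | ℱ 1] :=
    condExp_mono (hgi.indicator ((ℱ.le n) _ (hCm n))) (hWint n hn) hle
  filter_upwards [key n hn, hmono2] with ω h1 h2
  rw [hfun]
  exact le_trans h2 h1
end

section
/- Submartingale convergence with weights: let (Ω, ℱ, μ) be a probability space with a filtration (ℱ_i)_{i ≥ 1}, let p ≥ 1 be a real number, and let (X_i)_{i ≥ 1} be a nonnegative submartingale with respect to (ℱ_i) such that each X_i^p is integrable. Let (a_i)_{i ≥ 1} be a non-decreasing sequence of positive real numbers with a_i → ∞. If the series Σ_{i=1}^∞ ( E[X_{i+1}^p] − E[X_i^p] ) / a_{i+1}^p converges (its terms are nonnegative), then X_n / a_n → 0 almost everywhere as n → ∞. -/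
open MeasureTheory Filter Topology

lemma swc_rpow_sub_one_mul {p : ℝ} (hp : 1 < p) {x : ℝ} (hx : 0 ≤ x) :
    x ^ (p - 1) * x = x ^ p := by
  rcases hx.eq_or_lt with h | h
  · rw [← h, Real.zero_rpow (by linarith), Real.zero_rpow (by linarith), mul_zero]
  · rw [← Real.rpow_add_one h.ne' (p - 1), sub_add_cancel]

lemma swc_tangent {p : ℝ} (hp : 1 < p) {t x : ℝ} (ht : 0 ≤ t) (hx : 0 ≤ x) :
    p * (t ^ (p - 1) * x) ≤ x ^ p + (p - 1) * t ^ p := by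
  have hpq : p.HolderConjugate (p / (p - 1)) := Real.HolderConjugate.conjExponent hp
  have h := Real.young_inequality_of_nonneg hx (Real.rpow_nonneg ht (p - 1)) hpq
  have hne : p - 1 ≠ 0 := by linarith
  have ht2 : (t ^ (p - 1)) ^ (p / (p - 1)) = t ^ p := by
    rw [← Real.rpow_mul ht]
    congr 1
    rw [mul_comm]
    exact div_mul_cancel₀ p hne
  rw [ht2] at h
  have hp0 : (0:ℝ) < p := by linarith
  have h2 : t ^ p / (p / (p - 1)) = (p - 1) * t ^ p / p := by
    rw [div_div_eq_mul_div]
    ring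
  rw [h2] at h
  have h3 := mul_le_mul_of_nonneg_left h hp0.le
  have e1 : p * (x ^ p / p + (p - 1) * t ^ p / p) = x ^ p + (p - 1) * t ^ p := by
    field_simp
  calc p * (t ^ (p - 1) * x) = p * (x * t ^ (p - 1)) := by ring
    _ ≤ x ^ p + (p - 1) * t ^ p := by rw [← e1]; exact h3

lemma swc_mul_le {p : ℝ} (hp : 1 < p) {t x : ℝ} (ht : 0 ≤ t) (hx : 0 ≤ x) :
    t ^ (p - 1) * x ≤ t ^ p + x ^ p := by
  rcases le_total t x with h | h
  · calc t ^ (p - 1) * x ≤ x ^ (p - 1) * x :=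
        mul_le_mul_of_nonneg_right (Real.rpow_le_rpow ht h (by linarith)) hx
      _ = x ^ p := swc_rpow_sub_one_mul hp hx
      _ ≤ t ^ p + x ^ p := le_add_of_nonneg_left (Real.rpow_nonneg ht p)
  · calc t ^ (p - 1) * x ≤ t ^ (p - 1) * t :=
        mul_le_mul_of_nonneg_left h (Real.rpow_nonneg ht _)
      _ = t ^ p := swc_rpow_sub_one_mul hp ht
      _ ≤ t ^ p + x ^ p := le_add_of_nonneg_right (Real.rpow_nonneg hx p)

lemma swc_kronecker {b c : ℕ → ℝ} {L : ℝ} (hb : ∀ i, 0 ≤ b i) (hc0 : ∀ i, 0 ≤ c i)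
    (hcm : ∀ i j, i ≤ j → c j ≤ c i) (hc : Tendsto c atTop (𝓝 0))
    (hL : Tendsto (fun n => ∑ i ∈ Finset.range n, c (i + 1) * b i) atTop (𝓝 L)) :
    Tendsto (fun n => c n * ∑ i ∈ Finset.range n, b i) atTop (𝓝 0) := by
  set S : ℕ → ℝ := fun n => ∑ i ∈ Finset.range n, c (i + 1) * b i with hS
  have hSmono : Monotone S := by
    intro m n hmn
    exact Finset.sum_le_sum_of_subset_of_nonneg (Finset.range_subset_range.2 hmn)
      (fun i _ _ => mul_nonneg (hc0 _) (hb _))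
  rw [Metric.tendsto_atTop]
  intro ε hε
  have h1 : ∀ᶠ n in atTop, L - ε / 2 < S n := by
    have := hL (Ioi_mem_nhds (show L - ε / 2 < L by linarith))
    simpa using this
  obtain ⟨N, hN⟩ := h1.exists
  set B : ℝ := ∑ i ∈ Finset.range N, b i with hB
  have hBnn : 0 ≤ B := Finset.sum_nonneg fun i _ => hb i
  have h2 : ∀ᶠ n in atTop, c n * (B + 1) < ε / 2 := by
    have hcB : Tendsto (fun n => c n * (B + 1)) atTop (𝓝 (0 * (B + 1))) :=
      hc.mul_const _
    rw [zero_mul] at hcB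
    have := hcB (Iio_mem_nhds (show (0:ℝ) < ε/2 by linarith))
    simpa using this
  obtain ⟨M, hM⟩ := eventually_atTop.1 h2
  refine ⟨max N M, fun n hn => ?_⟩
  have hnN : N ≤ n := le_trans (le_max_left _ _) hn
  have hnM : M ≤ n := le_trans (le_max_right _ _) hn
  have hsplit : ∑ i ∈ Finset.range n, b i = B + ∑ i ∈ Finset.Ico N n, b i :=
    (Finset.sum_range_add_sum_Ico b hnN).symm
  have hsum_nonneg : 0 ≤ ∑ i ∈ Finset.range n, b i := Finset.sum_nonneg fun i _ => hb i
  rw [Real.dist_eq, sub_zero, abs_of_nonneg (mul_nonneg (hc0 n) hsum_nonneg)]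
  have hIco : ∑ i ∈ Finset.Ico N n, c n * b i ≤ ∑ i ∈ Finset.Ico N n, c (i + 1) * b i := by
    refine Finset.sum_le_sum fun i hi => ?_
    rcases Finset.mem_Ico.1 hi with ⟨_, hi2⟩
    exact mul_le_mul_of_nonneg_right (hcm (i + 1) n hi2) (hb i)
  have hIco2 : ∑ i ∈ Finset.Ico N n, c (i + 1) * b i = S n - S N :=
    Finset.sum_Ico_eq_sub _ hnN
  have hSle : S n ≤ L := hSmono.ge_of_tendsto hL n
  calc c n * ∑ i ∈ Finset.range n, b i
      = c n * B + ∑ i ∈ Finset.Ico N n, c n * b i := by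
        rw [hsplit, mul_add, Finset.mul_sum, Finset.mul_sum]
    _ ≤ c n * (B + 1) + (S n - S N) := by
        rw [hIco2] at hIco
        have : c n * B ≤ c n * (B + 1) := mul_le_mul_of_nonneg_left (by linarith) (hc0 n)
        linarith
    _ < ε / 2 + ε / 2 := by
        have := hM n hnM
        have : S n - S N < ε / 2 := by linarith
        linarith [hM n hnM]
    _ = ε := by ring

lemma swc_key {Ω : Type*} {m0 : MeasurableSpace Ω} {μ : Measure Ω} [IsProbabilityMeasure μ]
    (ℱ : Filtration ℕ m0) {p : ℝ} (hp : 1 ≤ p) {X : ℕ → Ω → ℝ} (i : ℕ)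
    (hXi : StronglyMeasurable[ℱ i] (X i))
    (hXi1 : Integrable (X (i + 1)) μ)
    (hsub : X i ≤ᵐ[μ] μ[X (i + 1) | ℱ i])
    (hposi : 0 ≤ᵐ[μ] X i) (hposi1 : 0 ≤ᵐ[μ] X (i + 1))
    (hXpi : Integrable (fun ω => X i ω ^ p) μ)
    (hXpi1 : Integrable (fun ω => X (i + 1) ω ^ p) μ) :
    (fun ω => X i ω ^ p) ≤ᵐ[μ] μ[fun ω => X (i + 1) ω ^ p | ℱ i] := by
  rcases hp.eq_or_lt with h | hp1
  · simp only [← h, Real.rpow_one]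
    exact hsub
  · have hq0 : (0:ℝ) < p - 1 := by linarith
    have hp0 : (0:ℝ) < p := by linarith
    set T : Ω → ℝ := fun ω => X i ω ^ (p - 1) with hT
    have hcontq : Continuous fun x : ℝ => x ^ (p - 1) :=
      continuous_iff_continuousAt.2 fun x => Real.continuousAt_rpow_const x _ (Or.inr hq0.le)
    have hcontp : Continuous fun x : ℝ => x ^ p :=
      continuous_iff_continuousAt.2 fun x => Real.continuousAt_rpow_const x _ (Or.inr hp0.le)
    have hTmeas : StronglyMeasurable[ℱ i] T := hcontq.comp_stronglyMeasurable hXi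
    have hXpi_meas : StronglyMeasurable[ℱ i] (fun ω => X i ω ^ p) :=
      hcontp.comp_stronglyMeasurable hXi
    have hTX : Integrable (T * X (i + 1)) μ := by
      refine Integrable.mono' (hXpi.add hXpi1) ?_ ?_
      · exact (hTmeas.mono (ℱ.le i)).aestronglyMeasurable.mul hXi1.aestronglyMeasurable
      · filter_upwards [hposi, hposi1] with ω h1 h2
        simp only [Pi.mul_apply, Real.norm_eq_abs, Pi.add_apply]
        rw [abs_of_nonneg (mul_nonneg (Real.rpow_nonneg h1 _) h2)]
        exact swc_mul_le hp1 h1 h2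
    have hv : Integrable (fun ω => p * (T ω * X (i + 1) ω) - (p - 1) * X i ω ^ p) μ := by
      have h1 := hTX.const_mul p
      have h2 := hXpi.const_mul (p - 1)
      exact h1.sub h2
    have hvle : (fun ω => p * (T ω * X (i + 1) ω) - (p - 1) * X i ω ^ p)
        ≤ᵐ[μ] (fun ω => X (i + 1) ω ^ p) := by
      filter_upwards [hposi, hposi1] with ω h1 h2
      have := swc_tangent hp1 h1 h2
      linarith
    have hmono := condExp_mono (m := ℱ i) hv hXpi1 hvle
    have e0 : (fun ω => p * (T ω * X (i + 1) ω) - (p - 1) * X i ω ^ p)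
        = p • (T * X (i + 1)) - (p - 1) • (fun ω => X i ω ^ p) := by
      funext ω
      simp [smul_eq_mul]
    have e1 : μ[p • (T * X (i + 1)) - (p - 1) • (fun ω => X i ω ^ p)|ℱ i]
        =ᵐ[μ] μ[p • (T * X (i + 1))|ℱ i] - μ[(p - 1) • (fun ω => X i ω ^ p)|ℱ i] :=
      condExp_sub (hTX.smul p) (hXpi.smul (p - 1)) _
    have e2 : μ[p • (T * X (i + 1))|ℱ i] =ᵐ[μ] p • μ[T * X (i + 1)|ℱ i] := condExp_smul _ _ _
    have e3 : μ[(p - 1) • (fun ω => X i ω ^ p)|ℱ i]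
        =ᵐ[μ] (p - 1) • μ[(fun ω => X i ω ^ p)|ℱ i] := condExp_smul _ _ _
    have e4 : μ[T * X (i + 1)|ℱ i] =ᵐ[μ] T * μ[X (i + 1)|ℱ i] :=
      condExp_mul_of_stronglyMeasurable_left hTmeas hTX hXi1
    have e5 : μ[(fun ω => X i ω ^ p)|ℱ i] =ᵐ[μ] (fun ω => X i ω ^ p) :=
      Filter.EventuallyEq.of_eq (condExp_of_stronglyMeasurable (ℱ.le i) hXpi_meas hXpi)
    rw [e0] at hmono
    filter_upwards [hmono, e1, e2, e3, e4, e5, hsub, hposi] with ω hm h1 h2 h3 h4 h5 hs hpos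
    simp only [Pi.sub_apply, Pi.smul_apply, Pi.mul_apply, smul_eq_mul] at hm h1 h2 h3 h4 h5
    have hTnn : 0 ≤ T ω := Real.rpow_nonneg hpos _
    have htx : T ω * X i ω = X i ω ^ p := swc_rpow_sub_one_mul hp1 hpos
    have hmul : p * (T ω * X i ω) ≤ p * (T ω * (μ[X (i + 1)|ℱ i]) ω) :=
      mul_le_mul_of_nonneg_left (mul_le_mul_of_nonneg_left hs hTnn) hp0.le
    nlinarith [hm, h1, h2, h3, h4, h5, hmul, htx]

/-- Submartingale convergence with weights. -/
theorem submartingale_weighted_convergence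
    {Ω : Type*} {m0 : MeasurableSpace Ω} {μ : Measure Ω} [IsProbabilityMeasure μ]
    (ℱ : Filtration ℕ m0) (p : ℝ) (hp : 1 ≤ p) (X : ℕ → Ω → ℝ)
    (hadp : ∀ i, 1 ≤ i → StronglyMeasurable[ℱ i] (X i))
    (hint : ∀ i, 1 ≤ i → Integrable (X i) μ)
    (hsub : ∀ i j, 1 ≤ i → i ≤ j → X i ≤ᵐ[μ] μ[X j | ℱ i])
    (hpos : ∀ i, 1 ≤ i → 0 ≤ᵐ[μ] X i)
    (hXp : ∀ i, 1 ≤ i → Integrable (fun ω => X i ω ^ p) μ)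
    (a : ℕ → ℝ) (hapos : ∀ i, 1 ≤ i → 0 < a i)
    (hamono : ∀ i j, 1 ≤ i → i ≤ j → a i ≤ a j)
    (hatop : Tendsto a atTop atTop)
    (hser : ∃ L : ℝ, Tendsto (fun n => ∑ i ∈ Finset.Ico 1 n,
        ((∫ ω, X (i + 1) ω ^ p ∂μ) - ∫ ω, X i ω ^ p ∂μ) / a (i + 1) ^ p)
      atTop (𝓝 L)) :
    ∀ᵐ ω ∂μ, Tendsto (fun n => X n ω / a n) atTop (𝓝 0) := by
  classical
  obtain ⟨L, hL⟩ := hser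
  have hp0 : (0:ℝ) < p := lt_of_lt_of_le one_pos hp
  set Y : ℕ → Ω → ℝ := fun i ω => X i ω ^ p with hYdef
  have hcontp : Continuous fun x : ℝ => x ^ p :=
    continuous_iff_continuousAt.2 fun x => Real.continuousAt_rpow_const x _ (Or.inr hp0.le)
  have hYmeas : ∀ i, 1 ≤ i → StronglyMeasurable[ℱ i] (Y i) :=
    fun i hi => hcontp.comp_stronglyMeasurable (hadp i hi)
  have hYint : ∀ i, 1 ≤ i → Integrable (Y i) μ := hXp
  have hYpos : ∀ i, 1 ≤ i → 0 ≤ᵐ[μ] Y i := fun i hi =>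
    (hpos i hi).mono fun ω h => Real.rpow_nonneg h p
  have hkey : ∀ i, 1 ≤ i → Y i ≤ᵐ[μ] μ[Y (i + 1)|ℱ i] := fun i hi =>
    swc_key ℱ hp i (hadp i hi) (hint (i + 1) (by omega)) (hsub i (i + 1) hi (by omega))
      (hpos i hi) (hpos (i + 1) (by omega)) (hXp i hi) (hXp (i + 1) (by omega))
  set c : ℕ → ℝ := fun n => (a n ^ p)⁻¹ with hcdef
  have hcpos : ∀ n, 1 ≤ n → 0 < c n := fun n hn =>
    inv_pos.2 (Real.rpow_pos_of_pos (hapos n hn) p)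
  have hcmono : ∀ i j, 1 ≤ i → i ≤ j → c j ≤ c i := by
    intro i j hi hij
    have h1 : (0:ℝ) < a i ^ p := Real.rpow_pos_of_pos (hapos i hi) p
    have h2 : a i ^ p ≤ a j ^ p :=
      Real.rpow_le_rpow (hapos i hi).le (hamono i j hi hij) hp0.le
    exact inv_anti₀ h1 h2
  have hctend : Tendsto c atTop (𝓝 0) := by
    have h1 : Tendsto (fun n => a n ^ p) atTop atTop :=
      (tendsto_rpow_atTop hp0).comp hatop
    exact h1.inv_tendsto_atTop
  set EY : ℕ → ℝ := fun n => ∫ ω, Y n ω ∂μ with hEYdef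
  set d : ℕ → ℝ := fun i => EY (i + 1) - EY i with hddef
  have hd0 : ∀ i, 1 ≤ i → 0 ≤ d i := by
    intro i hi
    have h1 : EY i ≤ ∫ ω, (μ[Y (i + 1)|ℱ i]) ω ∂μ :=
      integral_mono_ae (hYint i hi) integrable_condExp (hkey i hi)
    rw [integral_condExp (ℱ.le i)] at h1
    simp only [hddef]
    simp only [hEYdef] at h1 ⊢
    linarith
  set S : ℕ → ℝ := fun n => ∑ i ∈ Finset.Ico 1 n, c (i + 1) * d i with hSdef
  have hLS : Tendsto S atTop (𝓝 L) := by
    refine hL.congr fun n => ?_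
    refine Finset.sum_congr rfl fun i hi => ?_
    simp only [hcdef, hddef, hEYdef, hYdef]
    rw [div_eq_inv_mul]
  have hSmono : Monotone S := by
    intro m n hmn
    refine Finset.sum_le_sum_of_subset_of_nonneg (Finset.Ico_subset_Ico le_rfl hmn) ?_
    intro i hii _
    exact mul_nonneg (hcpos (i + 1) (by omega)).le (hd0 i (Finset.mem_Ico.1 hii).1)
  have hSle : ∀ n, S n ≤ L := fun n => hSmono.ge_of_tendsto hLS n
  have hEYtel : ∀ n, 1 ≤ n → EY n = EY 1 + ∑ i ∈ Finset.Ico 1 n, d i := by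
    intro n hn
    have h1 : ∑ i ∈ Finset.Ico 1 n, d i
        = ∑ i ∈ Finset.range n, d i - ∑ i ∈ Finset.range 1, d i :=
      Finset.sum_Ico_eq_sub _ hn
    have h2 : ∑ i ∈ Finset.range n, d i = EY n - EY 0 := Finset.sum_range_sub EY n
    rw [h1, h2, Finset.sum_range_one]
    simp only [hddef]
    ring
  have hEY1 : 0 ≤ EY 1 := integral_nonneg_of_ae (hYpos 1 le_rfl)
  have hcEY : ∀ n, 1 ≤ n → c n * EY n ≤ c 1 * EY 1 + L := by
    intro n hn
    rw [hEYtel n hn, mul_add]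
    have h1 : c n * EY 1 ≤ c 1 * EY 1 :=
      mul_le_mul_of_nonneg_right (hcmono 1 n le_rfl hn) hEY1
    have h2 : c n * ∑ i ∈ Finset.Ico 1 n, d i ≤ S n := by
      rw [Finset.mul_sum]
      refine Finset.sum_le_sum fun i hi => ?_
      rcases Finset.mem_Ico.1 hi with ⟨hi1, hi2⟩
      exact mul_le_mul_of_nonneg_right (hcmono (i + 1) n (by omega) hi2) (hd0 i hi1)
    have h3 := hSle n
    linarith
  have hEYnn : ∀ n, 1 ≤ n → 0 ≤ EY n := fun n hn => integral_nonneg_of_ae (hYpos n hn)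
  -- Kronecker
  have hEYtend : Tendsto (fun n => c n * EY n) atTop (𝓝 0) := by
    set b : ℕ → ℝ := fun j => if j = 0 then EY 1 else d j with hbdef
    set cc : ℕ → ℝ := fun n => c (max n 1) with hccdef
    have hccn : ∀ n, 1 ≤ n → cc n = c n := by
      intro n hn
      simp only [hccdef]
      rw [Nat.max_eq_left hn]
    have hb0 : ∀ j, 0 ≤ b j := by
      intro j
      simp only [hbdef]
      split_ifs with h
      · exact hEY1
      · exact hd0 j (by omega)
    have hcc0 : ∀ n, 0 ≤ cc n := fun n => (hcpos _ (le_max_right _ _)).le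
    have hccm : ∀ i j, i ≤ j → cc j ≤ cc i := fun i j hij =>
      hcmono _ _ (le_max_right _ _) (max_le_max hij le_rfl)
    have hcctend : Tendsto cc atTop (𝓝 0) := by
      refine hctend.congr' ?_
      filter_upwards [eventually_ge_atTop 1] with n hn
      exact (hccn n hn).symm
    have hbsum : ∀ n, 1 ≤ n → ∑ i ∈ Finset.range n, cc (i + 1) * b i = c 1 * EY 1 + S n := by
      intro n hn
      rw [Finset.sum_range_eq_add_Ico _ (by omega : 0 < n)]
      have e1 : cc (0 + 1) * b 0 = c 1 * EY 1 := by simp [hbdef, hccdef]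
      have e2 : ∑ i ∈ Finset.Ico 1 n, cc (i + 1) * b i = S n := by
        refine Finset.sum_congr rfl fun i hi => ?_
        rcases Finset.mem_Ico.1 hi with ⟨hi1, _⟩
        simp only [hbdef]
        rw [hccn (i + 1) (by omega), if_neg (show ¬ i = 0 by omega)]
      rw [e1, e2]
    have hbsum2 : ∀ n, 1 ≤ n → ∑ i ∈ Finset.range n, b i = EY n := by
      intro n hn
      rw [Finset.sum_range_eq_add_Ico _ (by omega : 0 < n), hEYtel n hn]
      have e1 : b 0 = EY 1 := by simp [hbdef]
      have e2 : ∑ i ∈ Finset.Ico 1 n, b i = ∑ i ∈ Finset.Ico 1 n, d i := by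
        refine Finset.sum_congr rfl fun i hi => ?_
        rcases Finset.mem_Ico.1 hi with ⟨hi1, _⟩
        simp only [hbdef]
        rw [if_neg (show ¬ i = 0 by omega)]
      rw [e1, e2]
    have hser' : Tendsto (fun n => ∑ i ∈ Finset.range n, cc (i + 1) * b i)
        atTop (𝓝 (c 1 * EY 1 + L)) := by
      refine (tendsto_const_nhds.add hLS).congr' ?_
      filter_upwards [eventually_ge_atTop 1] with n hn
      exact (hbsum n hn).symm
    have hk := swc_kronecker hb0 hcc0 hccm hcctend hser'
    refine hk.congr' ?_
    filter_upwards [eventually_ge_atTop 1] with n hn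
    rw [hbsum2 n hn, hccn n hn]
  -- the shifted filtration and auxiliary processes
  set 𝒢 : Filtration ℕ m0 :=
    { seq := fun n => ℱ (n + 1)
      mono' := fun i j hij => ℱ.mono (by omega)
      le' := fun n => ℱ.le (n + 1) } with h𝒢def
  set g : ℕ → Ω → ℝ := fun i ω => c (i + 1) * ((μ[Y (i + 1)|ℱ i]) ω - Y i ω) with hgdef
  set A : ℕ → Ω → ℝ := fun n ω => ∑ i ∈ Finset.Ico 1 n, g i ω with hAdef
  set f : ℕ → Ω → ℝ := fun n ω => A (n + 1) ω - c (n + 1) * Y (n + 1) ω with hfdef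
  have hg_nonneg : ∀ i, 1 ≤ i → 0 ≤ᵐ[μ] g i := by
    intro i hi
    filter_upwards [hkey i hi] with ω hω
    simp only [hgdef, Pi.zero_apply]
    exact mul_nonneg (hcpos (i + 1) (by omega)).le (by simpa using sub_nonneg.2 hω)
  have hg_meas : ∀ i n, 1 ≤ i → i ≤ n → StronglyMeasurable[ℱ n] (g i) := by
    intro i n hi hin
    exact ((stronglyMeasurable_condExp.sub (hYmeas i hi)).mono (ℱ.mono hin)).const_mul _
  have hg_int : ∀ i, 1 ≤ i → Integrable (g i) μ := fun i hi =>
    (integrable_condExp.sub (hYint i hi)).const_mul _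
  have hg_integral : ∀ i, 1 ≤ i → ∫ ω, g i ω ∂μ = c (i + 1) * d i := by
    intro i hi
    simp only [hgdef]
    rw [integral_const_mul, integral_sub integrable_condExp (hYint i hi),
      integral_condExp (ℱ.le i)]
  have hA_meas : ∀ n, StronglyMeasurable[ℱ (n + 1)] (A (n + 1)) := by
    intro n
    simp only [hAdef]
    refine Finset.stronglyMeasurable_fun_sum _ fun i hi => ?_
    rcases Finset.mem_Ico.1 hi with ⟨h1, h2⟩
    exact hg_meas i (n + 1) h1 (by omega)
  have hA_int : ∀ n, Integrable (A n) μ := by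
    intro n
    simp only [hAdef]
    exact integrable_finset_sum _ fun i hi => hg_int i (Finset.mem_Ico.1 hi).1
  have hA_nonneg : ∀ n, 0 ≤ᵐ[μ] A n := by
    intro n
    filter_upwards [ae_all_iff.2 fun j : ℕ => hg_nonneg (j + 1) (by omega)] with ω hω
    simp only [hAdef, Pi.zero_apply]
    refine Finset.sum_nonneg fun i hi => ?_
    rcases Finset.mem_Ico.1 hi with ⟨h1, _⟩
    obtain ⟨j, rfl⟩ : ∃ j, i = j + 1 := ⟨i - 1, by omega⟩
    simpa using hω j
  have hA_integral : ∀ n, ∫ ω, A n ω ∂μ = S n := by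
    intro n
    simp only [hAdef]
    rw [integral_finset_sum _ fun i hi => hg_int i (Finset.mem_Ico.1 hi).1]
    exact Finset.sum_congr rfl fun i hi => hg_integral i (Finset.mem_Ico.1 hi).1
  have hf_adp : StronglyAdapted 𝒢 f := by
    intro n
    exact (hA_meas n).sub ((hYmeas (n + 1) (by omega)).const_mul _)
  have hf_int : ∀ n, Integrable (f n) μ := fun n =>
    (hA_int (n + 1)).sub ((hYint (n + 1) (by omega)).const_mul _)
  have hf_sub : ∀ n, f n ≤ᵐ[μ] μ[f (n + 1)|𝒢 n] := by
    intro n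
    have hAsucc : A (n + 2) = fun ω => A (n + 1) ω + g (n + 1) ω := by
      funext ω
      simp only [hAdef]
      rw [Finset.sum_Ico_succ_top (by omega : 1 ≤ n + 1)]
    have hsm : StronglyMeasurable[ℱ (n + 1)] (A (n + 2)) := by
      rw [hAsucc]
      exact (hA_meas n).add (hg_meas (n + 1) (n + 1) (by omega) le_rfl)
    have e1 : μ[f (n + 1)|ℱ (n + 1)]
        =ᵐ[μ] μ[A (n + 2)|ℱ (n + 1)] - μ[(fun ω => c (n + 2) * Y (n + 2) ω)|ℱ (n + 1)] :=
      condExp_sub (hA_int (n + 2)) ((hYint (n + 2) (by omega)).const_mul _) _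
    have e2 : μ[A (n + 2)|ℱ (n + 1)] =ᵐ[μ] A (n + 2) :=
      Filter.EventuallyEq.of_eq
        (condExp_of_stronglyMeasurable (ℱ.le (n + 1)) hsm (hA_int (n + 2)))
    have e3 : μ[(fun ω => c (n + 2) * Y (n + 2) ω)|ℱ (n + 1)]
        =ᵐ[μ] fun ω => c (n + 2) * (μ[Y (n + 2)|ℱ (n + 1)]) ω := by
      have h := condExp_smul (μ := μ) (m := ℱ (n + 1)) (c (n + 2)) (Y (n + 2))
      refine h.mono fun ω hω => ?_
      simpa [Pi.smul_def, smul_eq_mul] using hω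
    filter_upwards [e1, e2, e3, hYpos (n + 1) (by omega)] with ω h1 h2 h3 hY
    simp only [Pi.sub_apply] at h1
    have hcc : c (n + 2) * Y (n + 1) ω ≤ c (n + 1) * Y (n + 1) ω :=
      mul_le_mul_of_nonneg_right (hcmono (n + 1) (n + 2) (by omega) (by omega))
        (by simpa using hY)
    have hA2 : A (n + 2) ω = A (n + 1) ω + c (n + 2) * ((μ[Y (n + 2)|ℱ (n + 1)]) ω - Y (n + 1) ω) := by
      rw [hAsucc]
    show f n ω ≤ (μ[f (n + 1)|𝒢 n]) ω
    have h𝒢 : (μ[f (n + 1)|𝒢 n]) ω = (μ[f (n + 1)|ℱ (n + 1)]) ω := rfl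
    rw [h𝒢, h1, h2, h3, hA2]
    have hfn : f n ω = A (n + 1) ω - c (n + 1) * Y (n + 1) ω := rfl
    rw [hfn]
    linarith
  have hfsubmart : Submartingale f 𝒢 μ := submartingale_nat hf_adp hf_int hf_sub
  -- L¹ bound
  have hfabs : ∀ n, ∀ᵐ ω ∂μ, ‖f n ω‖ ≤ A (n + 1) ω + c (n + 1) * Y (n + 1) ω := by
    intro n
    filter_upwards [hA_nonneg (n + 1), hYpos (n + 1) (by omega)] with ω h1 h2
    have h3 : 0 ≤ c (n + 1) * Y (n + 1) ω :=
      mul_nonneg (hcpos (n + 1) (by omega)).le (by simpa using h2)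
    have h4 : 0 ≤ A (n + 1) ω := by simpa using h1
    rw [Real.norm_eq_abs, abs_le]
    constructor <;> simp only [hfdef] <;> linarith
  have hfL1 : ∀ n, eLpNorm (f n) 1 μ ≤ ENNReal.ofReal (c 1 * EY 1 + 2 * L) := by
    intro n
    have hint2 : Integrable (fun ω => A (n + 1) ω + c (n + 1) * Y (n + 1) ω) μ :=
      (hA_int (n + 1)).add ((hYint (n + 1) (by omega)).const_mul _)
    have h1 : ∫ ω, ‖f n ω‖ ∂μ ≤ ∫ ω, (A (n + 1) ω + c (n + 1) * Y (n + 1) ω) ∂μ :=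
      integral_mono_ae (hf_int n).norm hint2 (hfabs n)
    rw [integral_add (hA_int (n + 1)) ((hYint (n + 1) (by omega)).const_mul _),
      hA_integral (n + 1), integral_const_mul] at h1
    have h2 := hcEY (n + 1) (by omega)
    have h3 := hSle (n + 1)
    have h4 : ∫ ω, ‖f n ω‖ ∂μ ≤ c 1 * EY 1 + 2 * L := by
      simp only [hEYdef] at h2
      linarith
    rw [eLpNorm_one_eq_lintegral_enorm,
      ← ofReal_integral_norm_eq_lintegral_enorm (hf_int n)]
    exact ENNReal.ofReal_le_ofReal h4
  have hfconv := hfsubmart.ae_tendsto_limitProcess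
    (R := (c 1 * EY 1 + 2 * L).toNNReal) fun n => hfL1 n
  -- a.e. convergence of A (n+1)
  have hGtend : ∀ᵐ ω ∂μ, ∃ lA : ℝ, Tendsto (fun n => A (n + 1) ω) atTop (𝓝 lA) := by
    have hGmeas : ∀ j : ℕ, AEMeasurable (fun ω => ENNReal.ofReal (g (j + 1) ω)) μ := fun j =>
      ENNReal.measurable_ofReal.comp_aemeasurable (hg_int (j + 1) (by omega)).aemeasurable
    have heach : ∀ j : ℕ, ∫⁻ ω, ENNReal.ofReal (g (j + 1) ω) ∂μ
        = ENNReal.ofReal (c (j + 2) * d (j + 1)) := by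
      intro j
      rw [← ofReal_integral_eq_lintegral_ofReal (hg_int (j + 1) (by omega))
        (hg_nonneg (j + 1) (by omega)), hg_integral (j + 1) (by omega)]
    have hkey2 : ∫⁻ ω, ∑' j : ℕ, ENNReal.ofReal (g (j + 1) ω) ∂μ ≤ ENNReal.ofReal L := by
      rw [lintegral_tsum hGmeas]
      rw [tsum_congr heach]
      refine ENNReal.tsum_le_of_sum_range_le fun n => ?_
      have h1 : ∑ j ∈ Finset.range n, ENNReal.ofReal (c (j + 2) * d (j + 1))
          = ENNReal.ofReal (∑ j ∈ Finset.range n, c (j + 2) * d (j + 1)) :=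
        (ENNReal.ofReal_sum_of_nonneg fun j _ =>
          mul_nonneg (hcpos (j + 2) (by omega)).le (hd0 (j + 1) (by omega))).symm
      rw [h1]
      refine ENNReal.ofReal_le_ofReal ?_
      have h2 : ∑ j ∈ Finset.range n, c (j + 2) * d (j + 1) = S (n + 1) := by
        simp only [hSdef]
        rw [Finset.sum_Ico_eq_sum_range]
        simp only [Nat.add_sub_cancel]
        refine Finset.sum_congr rfl fun j _ => ?_
        have : 1 + j = j + 1 := by omega
        rw [this]
      rw [h2]
      exact hSle (n + 1)
    have hfin : ∀ᵐ ω ∂μ, ∑' j : ℕ, ENNReal.ofReal (g (j + 1) ω) < ⊤ :=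
      ae_lt_top' (AEMeasurable.ennreal_tsum hGmeas) (hkey2.trans_lt ENNReal.ofReal_lt_top).ne
    filter_upwards [hfin, ae_all_iff.2 fun j : ℕ => hg_nonneg (j + 1) (by omega)] with ω hω hgnn
    have hgnn' : ∀ j : ℕ, 0 ≤ g (j + 1) ω := fun j => by simpa using hgnn j
    have hsummable : Summable fun j => g (j + 1) ω := by
      refine summable_of_sum_range_le (c := (∑' j : ℕ, ENNReal.ofReal (g (j + 1) ω)).toReal)
        hgnn' fun n => ?_
      have h1 : ∑ j ∈ Finset.range n, g (j + 1) ω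
          = (∑ j ∈ Finset.range n, ENNReal.ofReal (g (j + 1) ω)).toReal := by
        rw [← ENNReal.ofReal_sum_of_nonneg fun j _ => hgnn' j,
          ENNReal.toReal_ofReal (Finset.sum_nonneg fun j _ => hgnn' j)]
      rw [h1]
      exact ENNReal.toReal_mono hω.ne (ENNReal.sum_le_tsum _)
    refine ⟨∑' j, g (j + 1) ω, ?_⟩
    refine hsummable.hasSum.tendsto_sum_nat.congr fun n => ?_
    simp only [hAdef]
    rw [Finset.sum_Ico_eq_sum_range]
    simp only [Nat.add_sub_cancel]
    refine Finset.sum_congr rfl fun j _ => ?_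
    have : 1 + j = j + 1 := by omega
    rw [this]
  -- limit process
  set Z : ℕ → Ω → ℝ := fun n ω => c (n + 1) * Y (n + 1) ω with hZdef
  have hZint : ∀ n, Integrable (Z n) μ := fun n => (hYint (n + 1) (by omega)).const_mul _
  have hZeq : ∀ n ω, Z n ω = A (n + 1) ω - f n ω := by
    intro n ω
    simp only [hZdef, hfdef]
    ring
  set l : Ω → ℝ := fun ω => limsup (fun n => Z n ω) atTop with hldef
  have hZtend : ∀ᵐ ω ∂μ, Tendsto (fun n => Z n ω) atTop (𝓝 (l ω)) := by
    filter_upwards [hfconv, hGtend] with ω h1 h2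
    obtain ⟨lA, hlA⟩ := h2
    have h3 : Tendsto (fun n => Z n ω) atTop (𝓝 (lA - 𝒢.limitProcess f μ ω)) := by
      refine (hlA.sub h1).congr fun n => (hZeq n ω).symm
    have h4 : l ω = lA - 𝒢.limitProcess f μ ω := h3.limsup_eq
    rw [h4]
    exact h3
  have hZmeas : ∀ n, AEMeasurable (Z n) μ := fun n => (hZint n).aemeasurable
  have hlmeas : AEMeasurable l μ := aemeasurable_of_tendsto_metrizable_ae atTop hZmeas hZtend
  have hZnn : ∀ n, 0 ≤ᵐ[μ] Z n := fun n =>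
    (hYpos (n + 1) (by omega)).mono fun ω h => by
      simpa using mul_nonneg (hcpos (n + 1) (by omega)).le (by simpa using h)
  have hlnn : 0 ≤ᵐ[μ] l := by
    filter_upwards [hZtend, ae_all_iff.2 hZnn] with ω h1 h2
    simp only [Pi.zero_apply]
    exact ge_of_tendsto h1 (Eventually.of_forall fun n => by simpa using h2 n)
  have hZlint : ∀ n, ∫⁻ ω, ENNReal.ofReal (Z n ω) ∂μ = ENNReal.ofReal (c (n + 1) * EY (n + 1)) := by
    intro n
    rw [← ofReal_integral_eq_lintegral_ofReal (hZint n) (hZnn n)]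
    congr 1
    simp only [hZdef, hEYdef]
    rw [integral_const_mul]
  have hZlint_tend : Tendsto (fun n => ∫⁻ ω, ENNReal.ofReal (Z n ω) ∂μ) atTop (𝓝 0) := by
    have h1 : Tendsto (fun n : ℕ => c (n + 1) * EY (n + 1)) atTop (𝓝 0) :=
      hEYtend.comp (tendsto_add_atTop_nat 1)
    have h2 := (ENNReal.continuous_ofReal.tendsto 0).comp h1
    rw [ENNReal.ofReal_zero] at h2
    exact h2.congr fun n => (hZlint n).symm
  have hfatou : ∫⁻ ω, ENNReal.ofReal (l ω) ∂μ = 0 := by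
    have h1 : ∫⁻ ω, ENNReal.ofReal (l ω) ∂μ
        ≤ liminf (fun n => ∫⁻ ω, ENNReal.ofReal (Z n ω) ∂μ) atTop := by
      have heq : (fun ω => ENNReal.ofReal (l ω))
          =ᵐ[μ] fun ω => liminf (fun n => ENNReal.ofReal (Z n ω)) atTop := by
        filter_upwards [hZtend] with ω h
        exact ((ENNReal.continuous_ofReal.tendsto _).comp h).liminf_eq.symm
      rw [lintegral_congr_ae heq]
      exact lintegral_liminf_le' fun n =>
        ENNReal.measurable_ofReal.comp_aemeasurable (hZmeas n)
    rw [hZlint_tend.liminf_eq] at h1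
    exact le_antisymm h1 zero_le
  have hlzero : l =ᵐ[μ] 0 := by
    have h1 := (lintegral_eq_zero_iff'
      (ENNReal.measurable_ofReal.comp_aemeasurable hlmeas)).1 hfatou
    filter_upwards [h1, hlnn] with ω h2 h3
    simp only [Pi.zero_apply] at h2 h3 ⊢
    have h4 : l ω ≤ 0 := ENNReal.ofReal_eq_zero.1 h2
    linarith
  -- conclusion
  filter_upwards [hZtend, hlzero, ae_all_iff.2 fun n : ℕ => hpos (n + 1) (by omega)]
    with ω h1 h2 h3
  rw [h2] at h1
  simp only [Pi.zero_apply] at h1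
  have h4 : Tendsto (fun n => c n * Y n ω) atTop (𝓝 0) :=
    (tendsto_add_atTop_iff_nat 1).1 h1
  have h5 : Tendsto (fun n => (c n * Y n ω) ^ p⁻¹) atTop (𝓝 0) := by
    have hcont0 : ContinuousAt (fun x : ℝ => x ^ p⁻¹) 0 :=
      Real.continuousAt_rpow_const 0 _ (Or.inr (by positivity))
    have h6 := hcont0.tendsto.comp h4
    rwa [Real.zero_rpow (inv_ne_zero hp0.ne')] at h6
  refine h5.congr' ?_
  filter_upwards [eventually_ge_atTop 1] with n hn
  have hX0 : 0 ≤ X n ω := by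
    obtain ⟨m, rfl⟩ : ∃ m, n = m + 1 := ⟨n - 1, by omega⟩
    simpa using h3 m
  have ha0 : 0 < a n := hapos n hn
  have hcY : c n * Y n ω = (X n ω / a n) ^ p := by
    simp only [hYdef, hcdef]
    rw [Real.div_rpow hX0 ha0.le]
    ring
  rw [hcY, Real.rpow_rpow_inv (div_nonneg hX0 ha0.le) hp0.ne']
end

section
/- Conditional p-th moment increment bound for martingales, 1 ≤ p ≤ 2: let (Ω, ℱ, μ) be a probability space with a filtration (ℱ_i)_{i ≥ 1}, let (X_i)_{i ≥ 1} be a martingale with respect to (ℱ_i), and let p be a real number with 1 ≤ p ≤ 2. Assume |X_i|^p and |X_{i+1}|^p are integrable. Then almost everywhere: E[ |X_{i+1}|^p | ℱ_i ] − |X_i|^p ≤ 2 · E[ |X_{i+1} − X_i|^p | ℱ_i ]. -/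
open MeasureTheory Filter
open scoped NNReal

private lemma measurable_realSign : Measurable Real.sign := by
  have h : Real.sign = fun r : ℝ => if r < 0 then (-1:ℝ) else if 0 < r then 1 else 0 := by
    funext r; rfl
  rw [h]
  exact Measurable.ite (measurableSet_lt measurable_id measurable_const) measurable_const
    (Measurable.ite (measurableSet_lt measurable_const measurable_id) measurable_const
      measurable_const)

private lemma rpow_subadd {q a b : ℝ} (hq0 : 0 ≤ q) (hq1 : q ≤ 1) (ha : 0 ≤ a) (hb : 0 ≤ b) :
    (a + b) ^ q ≤ a ^ q + b ^ q := by
  have h := NNReal.rpow_add_le_add_rpow a.toNNReal b.toNNReal hq0 hq1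
  have h2 := NNReal.coe_le_coe.2 h
  rw [NNReal.coe_add] at h2
  rw [NNReal.coe_rpow, NNReal.coe_rpow, NNReal.coe_rpow, Real.coe_toNNReal _ ha,
    Real.coe_toNNReal _ hb, ← Real.toNNReal_add ha hb,
    Real.coe_toNNReal _ (by linarith : (0:ℝ) ≤ a + b)] at h2
  exact h2

private lemma key1 {p : ℝ} (hp1 : 1 ≤ p) (hp2 : p ≤ 2) {t : ℝ} (ht : 0 ≤ t) :
    (1 + t) ^ p ≤ 1 + p * t + 2 * t ^ p := by
  have hp0 : (0:ℝ) < p := by linarith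
  set f : ℝ → ℝ := fun t => 1 + p * t + 2 * t ^ p - (1 + t) ^ p with hf
  have hder : ∀ x : ℝ, 0 < x →
      HasDerivAt f (p + 2 * (p * x ^ (p - 1)) - 1 * p * (1 + x) ^ (p - 1)) x := by
    intro x hx
    have h1 : HasDerivAt (fun t : ℝ => 1 + p * t) p x := by
      simpa using ((hasDerivAt_id x).const_mul p).const_add 1
    have h2 : HasDerivAt (fun t : ℝ => 2 * t ^ p) (2 * (p * x ^ (p - 1))) x :=
      (Real.hasDerivAt_rpow_const (Or.inr hp1)).const_mul 2
    have h3 : HasDerivAt (fun t : ℝ => (1 + t) ^ p) (1 * p * (1 + x) ^ (p - 1)) x :=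
      HasDerivAt.rpow_const (by simpa using (hasDerivAt_id x).const_add 1) (Or.inr hp1)
    exact (h1.add h2).sub h3
  have hcont : ContinuousOn f (Set.Ici 0) := by
    have c1 : Continuous fun t : ℝ => t ^ p := by
      rw [continuous_iff_continuousAt]
      exact fun x => Real.continuousAt_rpow_const x p (Or.inr hp0.le)
    have c2 : Continuous fun t : ℝ => (1 + t) ^ p := by
      rw [continuous_iff_continuousAt]
      exact fun x => (Real.continuousAt_rpow_const (1 + x) p (Or.inr hp0.le)).comp
        (by fun_prop)
    exact (((continuous_const.add (continuous_const.mul continuous_id)).add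
      (continuous_const.mul c1)).sub c2).continuousOn
  have hmono : MonotoneOn f (Set.Ici 0) := by
    apply monotoneOn_of_deriv_nonneg (convex_Ici 0) hcont
    · intro x hx
      rw [interior_Ici] at hx
      exact ((hder x hx).differentiableAt).differentiableWithinAt
    · intro x hx
      rw [interior_Ici] at hx
      rw [(hder x hx).deriv]
      have hsub : (1 + x) ^ (p - 1) ≤ 1 + x ^ (p - 1) := by
        have := rpow_subadd (q := p - 1) (a := 1) (b := x) (by linarith) (by linarith) zero_le_one hx.le
        · simpa using this
      have hx1 : (0:ℝ) ≤ x ^ (p - 1) := Real.rpow_nonneg hx.le _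
      nlinarith [hp0]
  have h0 : f 0 = 0 := by
    simp [hf, Real.zero_rpow hp0.ne', Real.one_rpow]
  have := hmono (Set.self_mem_Ici) (Set.mem_Ici.2 ht) ht
  rw [h0] at this
  simp only [hf] at this
  linarith

private lemma key2 {p : ℝ} (hp1 : 1 ≤ p) (hp2 : p ≤ 2) {t : ℝ} (ht0 : 0 ≤ t) (ht1 : t ≤ 1) :
    (1 - t) ^ p ≤ 1 - p * t + 2 * t ^ p := by
  have hp0 : (0:ℝ) < p := by linarith
  set g : ℝ → ℝ := fun t => 1 - p * t + 2 * t ^ p - (1 - t) ^ p with hg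
  have hder : ∀ x : ℝ, 0 < x → x < 1 →
      HasDerivAt g (-p + 2 * (p * x ^ (p - 1)) - (-1) * p * (1 - x) ^ (p - 1)) x := by
    intro x hx hx1
    have h1' : HasDerivAt (fun t : ℝ => 1 - p * t) (-p) x := by
      have := ((hasDerivAt_id x).const_mul p).neg.const_add 1
      simpa [sub_eq_add_neg] using this
    have h2 : HasDerivAt (fun t : ℝ => 2 * t ^ p) (2 * (p * x ^ (p - 1))) x :=
      (Real.hasDerivAt_rpow_const (Or.inr hp1)).const_mul 2
    have hin : HasDerivAt (fun t : ℝ => 1 - t) (-1 : ℝ) x := by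
      simpa [sub_eq_add_neg] using (hasDerivAt_id x).neg.const_add 1
    have h3 : HasDerivAt (fun t : ℝ => (1 - t) ^ p) ((-1) * p * (1 - x) ^ (p - 1)) x :=
      HasDerivAt.rpow_const hin (Or.inr hp1)
    exact (h1'.add h2).sub h3
  have hcont : ContinuousOn g (Set.Icc 0 1) := by
    have c1 : Continuous fun t : ℝ => t ^ p := by
      rw [continuous_iff_continuousAt]
      exact fun x => Real.continuousAt_rpow_const x p (Or.inr hp0.le)
    have c2 : Continuous fun t : ℝ => (1 - t) ^ p := by
      rw [continuous_iff_continuousAt]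
      exact fun x => (Real.continuousAt_rpow_const (1 - x) p (Or.inr hp0.le)).comp
        (by fun_prop)
    exact (((continuous_const.sub (continuous_const.mul continuous_id)).add
      (continuous_const.mul c1)).sub c2).continuousOn
  have hmono : MonotoneOn g (Set.Icc 0 1) := by
    apply monotoneOn_of_deriv_nonneg (convex_Icc 0 1) hcont
    · intro x hx
      rw [interior_Icc] at hx
      exact ((hder x hx.1 hx.2).differentiableAt).differentiableWithinAt
    · intro x hx
      rw [interior_Icc] at hx
      rw [(hder x hx.1 hx.2).deriv]
      have hsub : (1:ℝ) ≤ x ^ (p - 1) + (1 - x) ^ (p - 1) := by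
        have := rpow_subadd (q := p - 1) (a := x) (b := 1 - x) (by linarith) (by linarith)
          hx.1.le (by linarith [hx.2])
        simpa using this
      have hx1 : (0:ℝ) ≤ x ^ (p - 1) := Real.rpow_nonneg hx.1.le _
      nlinarith [hp0]
  have h0 : g 0 = 0 := by
    simp [hg, Real.zero_rpow hp0.ne', Real.one_rpow]
  have := hmono (Set.left_mem_Icc.2 zero_le_one) (Set.mem_Icc.2 ⟨ht0, ht1⟩) ht0
  rw [h0] at this
  simp only [hg] at this
  linarith

private lemma key3 {p : ℝ} (hp1 : 1 ≤ p) (hp2 : p ≤ 2) {t : ℝ} (ht : 1 ≤ t) :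
    (t - 1) ^ p ≤ 1 - p * t + 2 * t ^ p := by
  have h1 : (t - 1) ^ p ≤ t ^ p :=
    Real.rpow_le_rpow (by linarith) (by linarith) (by linarith)
  have hbern : 1 + p * (t - 1) ≤ t ^ p := by
    have := one_add_mul_self_le_rpow_one_add (s := t - 1) (by linarith) hp1
    simpa using this
  nlinarith

private lemma keyT {p : ℝ} (hp1 : 1 ≤ p) (hp2 : p ≤ 2) (t : ℝ) :
    |1 + t| ^ p ≤ 1 + p * t + 2 * |t| ^ p := by
  rcases le_or_gt 0 t with ht | ht
  · rw [abs_of_nonneg (by linarith), abs_of_nonneg ht]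
    exact key1 hp1 hp2 ht
  rcases le_or_gt (-1) t with ht1 | ht1
  · rw [abs_of_nonneg (by linarith), abs_of_neg ht]
    have := key2 hp1 hp2 (t := -t) (by linarith) (by linarith)
    calc (1 + t) ^ p = (1 - (-t)) ^ p := by ring_nf
      _ ≤ 1 - p * (-t) + 2 * (-t) ^ p := this
      _ = 1 + p * t + 2 * (-t) ^ p := by ring
  · rw [abs_of_neg (by linarith), abs_of_neg ht]
    have := key3 hp1 hp2 (t := -t) (by linarith)
    calc (-(1 + t)) ^ p = (-t - 1) ^ p := by ring_nf
      _ ≤ 1 - p * (-t) + 2 * (-t) ^ p := this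
      _ = 1 + p * t + 2 * (-t) ^ p := by ring

private lemma key_pos {p : ℝ} (hp1 : 1 ≤ p) (hp2 : p ≤ 2) {x : ℝ} (hx : 0 < x) (y : ℝ) :
    |x + y| ^ p ≤ x ^ p + p * x ^ (p - 1) * y + 2 * |y| ^ p := by
  have hx0 : x ≠ 0 := hx.ne'
  have h := keyT hp1 hp2 (y / x)
  have hxp : (0:ℝ) < x ^ p := Real.rpow_pos_of_pos hx p
  have hmul := mul_le_mul_of_nonneg_left h hxp.le
  have e1 : x ^ p * |1 + y / x| ^ p = |x + y| ^ p := by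
    rw [← Real.mul_rpow hx.le (abs_nonneg _)]
    congr 1
    calc x * |1 + y / x| = |x| * |1 + y / x| := by rw [abs_of_pos hx]
      _ = |x * (1 + y / x)| := (abs_mul _ _).symm
      _ = |x + y| := by rw [mul_add, mul_one, mul_div_cancel₀ _ hx0]
  have e2 : x ^ p * (y / x) = x ^ (p - 1) * y := by
    have : x ^ p = x ^ (p - 1) * x := by
      rw [← Real.rpow_add_one hx0]
      ring_nf
    rw [this]
    field_simp
  have e3 : x ^ p * |y / x| ^ p = |y| ^ p := by
    rw [← Real.mul_rpow hx.le (abs_nonneg _)]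
    congr 1
    rw [abs_div, abs_of_pos hx, mul_div_cancel₀ _ hx0]
  calc |x + y| ^ p = x ^ p * |1 + y / x| ^ p := e1.symm
    _ ≤ x ^ p * (1 + p * (y / x) + 2 * |y / x| ^ p) := hmul
    _ = x ^ p + p * (x ^ p * (y / x)) + 2 * (x ^ p * |y / x| ^ p) := by ring
    _ = x ^ p + p * x ^ (p - 1) * y + 2 * |y| ^ p := by rw [e2, e3]; ring

private lemma key_main {p : ℝ} (hp1 : 1 ≤ p) (hp2 : p ≤ 2) (x y : ℝ) :
    |x + y| ^ p ≤ |x| ^ p + p * Real.sign x * |x| ^ (p - 1) * y + 2 * |y| ^ p := by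
  rcases lt_trichotomy x 0 with hx | hx | hx
  · have h := key_pos hp1 hp2 (x := -x) (by linarith) (-y)
    rw [Real.sign_of_neg hx, abs_of_neg hx]
    have e : |(-x) + (-y)| = |x + y| := by rw [← abs_neg]; ring_nf
    rw [e] at h
    calc |x + y| ^ p ≤ (-x) ^ p + p * (-x) ^ (p - 1) * (-y) + 2 * |(-y)| ^ p := h
      _ = (-x) ^ p + p * (-1) * (-x) ^ (p - 1) * y + 2 * |y| ^ p := by
          rw [abs_neg]; ring
  · subst hx
    rw [Real.sign_zero, abs_zero, Real.zero_rpow (by linarith : p ≠ 0)]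
    have : (0:ℝ) ≤ |y| ^ p := Real.rpow_nonneg (abs_nonneg _) _
    simp only [zero_add, mul_zero, zero_mul, mul_comm]
    nlinarith [this]
  · have h := key_pos hp1 hp2 hx y
    rw [Real.sign_of_pos hx, abs_of_pos hx]
    calc |x + y| ^ p ≤ x ^ p + p * x ^ (p - 1) * y + 2 * |y| ^ p := h
      _ = x ^ p + p * 1 * x ^ (p - 1) * y + 2 * |y| ^ p := by ring

private lemma young_aux {p a b : ℝ} (hp1 : 1 ≤ p) (ha : 0 ≤ a) (hb : 0 ≤ b) :
    a ^ (p - 1) * b ≤ a ^ p + b ^ p := by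
  have hap : (0:ℝ) ≤ a ^ p := Real.rpow_nonneg ha _
  have hbp : (0:ℝ) ≤ b ^ p := Real.rpow_nonneg hb _
  rcases eq_or_lt_of_le ha with rfl | ha0
  · rcases eq_or_lt_of_le hp1 with rfl | hp
    · simp [Real.rpow_one]
    · rw [Real.zero_rpow (by linarith : p - 1 ≠ 0), zero_mul]
      positivity
  rcases le_total b a with hba | hab
  · calc a ^ (p - 1) * b ≤ a ^ (p - 1) * a :=
        mul_le_mul_of_nonneg_left hba (Real.rpow_nonneg ha _)
      _ = a ^ p := by rw [← Real.rpow_add_one ha0.ne']; ring_nf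
      _ ≤ a ^ p + b ^ p := by linarith
  · calc a ^ (p - 1) * b ≤ b ^ (p - 1) * b :=
        mul_le_mul_of_nonneg_right (Real.rpow_le_rpow ha hab (by linarith)) hb
      _ ≤ b ^ p := by
        rcases eq_or_lt_of_le hb with rfl | hb0
        · simp [Real.rpow_nonneg]
        · rw [← Real.rpow_add_one hb0.ne']; ring_nf; try exact le_rfl
      _ ≤ a ^ p + b ^ p := by linarith

private lemma pow_bound {p a b : ℝ} (hp1 : 1 ≤ p) (hp2 : p ≤ 2) (ha : 0 ≤ a) (hb : 0 ≤ b) :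
    (a + b) ^ p ≤ 4 * (a ^ p + b ^ p) := by
  have hm : 0 ≤ max a b := le_max_of_le_left ha
  have h1 : a + b ≤ 2 * max a b := by
    rcases le_total a b with h | h <;> simp [max_eq_right, max_eq_left, h] <;> linarith
  have h2 : (a + b) ^ p ≤ (2 * max a b) ^ p :=
    Real.rpow_le_rpow (by linarith) h1 (by linarith)
  have h3 : (2 * max a b) ^ p = 2 ^ p * max a b ^ p :=
    Real.mul_rpow (by norm_num) hm
  have h4 : (2:ℝ) ^ p ≤ 4 := by
    have := Real.rpow_le_rpow_of_exponent_le (by norm_num : (1:ℝ) ≤ 2) hp2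
    rwa [show ((2:ℝ):ℝ) ^ (2:ℝ) = 4 by
      rw [show (2:ℝ) = ((2:ℕ):ℝ) by norm_num, Real.rpow_natCast]; norm_num] at this
  have h5 : max a b ^ p ≤ a ^ p + b ^ p := by
    rcases le_total a b with h | h
    · rw [max_eq_right h]; linarith [Real.rpow_nonneg ha p]
    · rw [max_eq_left h]; linarith [Real.rpow_nonneg hb p]
  have hmp : (0:ℝ) ≤ max a b ^ p := Real.rpow_nonneg hm _
  calc (a + b) ^ p ≤ 2 ^ p * max a b ^ p := by rw [← h3]; exact h2
    _ ≤ 4 * (a ^ p + b ^ p) := by nlinarith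

/-- Conditional `p`-th moment increment bound for martingales, `1 ≤ p ≤ 2`. -/
theorem martingale_condexp_rpow_increment_bound
    {Ω : Type*} {m0 : MeasurableSpace Ω} {μ : Measure Ω} [IsProbabilityMeasure μ]
    (ℱ : Filtration ℕ m0) (X : ℕ → Ω → ℝ)
    (hadp : ∀ i, 1 ≤ i → StronglyMeasurable[ℱ i] (X i))
    (hint : ∀ i, 1 ≤ i → Integrable (X i) μ)
    (hmart : ∀ i j, 1 ≤ i → i ≤ j → μ[X j | ℱ i] =ᵐ[μ] X i)
    (p : ℝ) (hp1 : 1 ≤ p) (hp2 : p ≤ 2) (i : ℕ) (hi : 1 ≤ i)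
    (hXi : Integrable (fun ω => |X i ω| ^ p) μ)
    (hXi1 : Integrable (fun ω => |X (i + 1) ω| ^ p) μ) :
    ∀ᵐ ω ∂μ,
      (μ[fun ω => |X (i + 1) ω| ^ p | ℱ i]) ω - |X i ω| ^ p ≤
        2 * (μ[fun ω => |X (i + 1) ω - X i ω| ^ p | ℱ i]) ω := by
  have hp0 : (0:ℝ) < p := by linarith
  have hi1 : 1 ≤ i + 1 := by omega
  have hXiSM : StronglyMeasurable[ℱ i] (X i) := hadp i hi
  have hXi_meas : Measurable[ℱ i] (X i) := hXiSM.measurable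
  set D : Ω → ℝ := fun ω => X (i + 1) ω - X i ω with hDdef
  have hDint : Integrable D μ := (hint (i + 1) hi1).sub (hint i hi)
  have hcontp : ∀ q : ℝ, 0 ≤ q → Continuous (fun x : ℝ => |x| ^ q) := by
    intro q hq
    rw [continuous_iff_continuousAt]
    intro x
    exact (Real.continuousAt_rpow_const _ _ (Or.inr hq)).comp continuous_abs.continuousAt
  -- integrability of |D|^p
  have habs : ∀ ω, |D ω| ^ p ≤ 4 * (|X i ω| ^ p + |X (i + 1) ω| ^ p) := by
    intro ω
    have h1 : |D ω| ≤ |X i ω| + |X (i + 1) ω| := by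
      calc |D ω| = |X (i + 1) ω - X i ω| := rfl
        _ ≤ |X (i + 1) ω| + |X i ω| := abs_sub _ _
        _ = |X i ω| + |X (i + 1) ω| := by ring
    calc |D ω| ^ p ≤ (|X i ω| + |X (i + 1) ω|) ^ p :=
        Real.rpow_le_rpow (abs_nonneg _) h1 hp0.le
      _ ≤ 4 * (|X i ω| ^ p + |X (i + 1) ω| ^ p) :=
        pow_bound hp1 hp2 (abs_nonneg _) (abs_nonneg _)
  have hDp_int : Integrable (fun ω => |D ω| ^ p) μ := by
    refine Integrable.mono ((hXi.add hXi1).const_mul 4)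
      ((hcontp p hp0.le).comp_aestronglyMeasurable hDint.1) (ae_of_all _ fun ω => ?_)
    simp only [Real.norm_eq_abs, Pi.add_apply]
    rw [abs_of_nonneg (show (0:ℝ) ≤ |D ω| ^ p by positivity),
      abs_of_nonneg (show (0:ℝ) ≤ 4 * (|X i ω| ^ p + |X (i + 1) ω| ^ p) by positivity)]
    exact habs ω
  set c : Ω → ℝ := fun ω => p * Real.sign (X i ω) * |X i ω| ^ (p - 1) with hcdef
  have hcSM : StronglyMeasurable[ℱ i] c :=
    ((measurable_const.mul (measurable_realSign.comp hXi_meas)).mul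
      (((hcontp (p - 1) (by linarith)).measurable).comp hXi_meas)).stronglyMeasurable
  have hcbound : ∀ ω, |c ω * D ω| ≤ 2 * (|X i ω| ^ p + |D ω| ^ p) := by
    intro ω
    have hsign : |Real.sign (X i ω)| ≤ 1 := by
      rcases Real.sign_apply_eq (X i ω) with h | h | h <;> simp [h]
    have hpow : (0:ℝ) ≤ |X i ω| ^ (p - 1) := Real.rpow_nonneg (abs_nonneg _) _
    have h1 : |c ω * D ω| ≤ p * |X i ω| ^ (p - 1) * |D ω| := by
      rw [abs_mul]
      have : |c ω| ≤ p * |X i ω| ^ (p - 1) := by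
        rw [hcdef]
        simp only []
        rw [abs_mul, abs_mul, abs_of_pos hp0, abs_of_nonneg hpow]
        have := mul_le_mul_of_nonneg_right
          (mul_le_mul_of_nonneg_left hsign hp0.le) hpow
        simpa using this
      exact mul_le_mul_of_nonneg_right this (abs_nonneg _)
    have h2 : |X i ω| ^ (p - 1) * |D ω| ≤ |X i ω| ^ p + |D ω| ^ p :=
      young_aux hp1 (abs_nonneg _) (abs_nonneg _)
    have h3 : p * (|X i ω| ^ (p - 1) * |D ω|) ≤ p * (|X i ω| ^ p + |D ω| ^ p) :=
      mul_le_mul_of_nonneg_left h2 hp0.le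
    have h4 : p * (|X i ω| ^ p + |D ω| ^ p) ≤ 2 * (|X i ω| ^ p + |D ω| ^ p) :=
      mul_le_mul_of_nonneg_right hp2 (by positivity)
    nlinarith [h1, h3, h4]
  have hcD_int : Integrable (fun ω => c ω * D ω) μ := by
    refine Integrable.mono ((hXi.add hDp_int).const_mul 2)
      (((hcSM.mono (ℱ.le i)).aestronglyMeasurable).mul hDint.1) (ae_of_all _ fun ω => ?_)
    simp only [Real.norm_eq_abs, Pi.add_apply]
    rw [abs_of_nonneg (show (0:ℝ) ≤ 2 * (|X i ω| ^ p + |D ω| ^ p) by positivity)]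
    exact hcbound ω
  -- pointwise inequality
  have hpt : ∀ ω, |X (i + 1) ω| ^ p ≤ |X i ω| ^ p + c ω * D ω + 2 * |D ω| ^ p := by
    intro ω
    have h := key_main hp1 hp2 (X i ω) (D ω)
    have hxy : X i ω + D ω = X (i + 1) ω := by simp [hDdef]
    rw [hxy] at h
    exact h
  -- conditional expectation steps
  have hRHSint : Integrable (fun ω => |X i ω| ^ p + c ω * D ω + 2 * |D ω| ^ p) μ :=
    (hXi.add hcD_int).add (hDp_int.const_mul 2)
  have hmono : μ[fun ω => |X (i + 1) ω| ^ p|ℱ i] ≤ᵐ[μ]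
      μ[fun ω => |X i ω| ^ p + c ω * D ω + 2 * |D ω| ^ p|ℱ i] :=
    condExp_mono hXi1 hRHSint (ae_of_all _ hpt)
  have hA : μ[fun ω => |X i ω| ^ p|ℱ i] =ᵐ[μ] fun ω => |X i ω| ^ p := by
    rw [condExp_of_stronglyMeasurable (ℱ.le i)
      ((hcontp p hp0.le).comp_stronglyMeasurable hXiSM) hXi]
  have hD0 : μ[D|ℱ i] =ᵐ[μ] 0 := by
    have hsub : μ[D|ℱ i] =ᵐ[μ] μ[X (i + 1)|ℱ i] - μ[X i|ℱ i] :=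
      condExp_sub (hint (i + 1) hi1) (hint i hi) (ℱ i)
    filter_upwards [hsub, hmart i (i + 1) hi (by omega), hmart i i hi le_rfl]
      with ω h1 h2 h3
    simp only [Pi.sub_apply, Pi.zero_apply] at *
    rw [h1, h2, h3, sub_self]
  have hB : μ[fun ω => c ω * D ω|ℱ i] =ᵐ[μ] fun _ => (0:ℝ) := by
    have hpull : μ[c * D|ℱ i] =ᵐ[μ] c * μ[D|ℱ i] :=
      condExp_mul_of_stronglyMeasurable_left hcSM hcD_int hDint
    filter_upwards [hpull, hD0] with ω h1 h2
    have : (μ[c * D|ℱ i]) ω = c ω * (μ[D|ℱ i]) ω := h1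
    rw [show (μ[fun ω => c ω * D ω|ℱ i]) ω = (μ[c * D|ℱ i]) ω from rfl, this,
      show (μ[D|ℱ i]) ω = 0 from h2, mul_zero]
  have hC : μ[fun ω => 2 * |D ω| ^ p|ℱ i] =ᵐ[μ]
      fun ω => 2 * (μ[fun ω => |D ω| ^ p|ℱ i]) ω := by
    have := condExp_smul (μ := μ) (m := ℱ i) (2:ℝ) (fun ω => |D ω| ^ p)
    filter_upwards [this] with ω h
    exact h
  have hadd1 : μ[fun ω => |X i ω| ^ p + c ω * D ω + 2 * |D ω| ^ p|ℱ i] =ᵐ[μ]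
      μ[fun ω => |X i ω| ^ p + c ω * D ω|ℱ i] + μ[fun ω => 2 * |D ω| ^ p|ℱ i] :=
    condExp_add (hXi.add hcD_int) (hDp_int.const_mul 2) (ℱ i)
  have hadd2 : μ[fun ω => |X i ω| ^ p + c ω * D ω|ℱ i] =ᵐ[μ]
      μ[fun ω => |X i ω| ^ p|ℱ i] + μ[fun ω => c ω * D ω|ℱ i] :=
    condExp_add hXi hcD_int (ℱ i)
  filter_upwards [hmono, hA, hB, hC, hadd1, hadd2] with ω h0 h1 h2 h3 h4 h5
  simp only [Pi.add_apply] at h4 h5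
  have := h0
  rw [h4, h5, h1, h2, h3] at this
  linarith
end

section
/- Strong law of large numbers for p > 2 with general weights: let (Ω, ℱ, μ) be a probability space with a filtration (ℱ_n)_{n ≥ 1}, let p > 2 be a real number, and let (Y_n)_{n ≥ 1} be a martingale difference sequence with respect to (ℱ_n) such that each |Y_n|^p is integrable. Let (a_n)_{n ≥ 1} be a non-decreasing sequence of positive real numbers, and let k > 0 and γ be real numbers with Σ_{i=1}^∞ 1/a_i^k < ∞ and p ≥ γ + (p/2 − 1)·k. If Σ_{i=1}^∞ E[|Y_i|^p] / a_i^γ < ∞, then (1/a_n) · Σ_{i=1}^n Y_i → 0 almost everywhere as n → ∞. -/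
open MeasureTheory Filter Topology Asymptotics
open scoped ENNReal NNReal

section Aux

lemma my_kronecker {b : ℕ → ℝ} (hb : Monotone b) (hb0 : ∀ n, 0 < b n)
    (hbtop : Tendsto b atTop atTop) {u : ℕ → ℝ} {L : ℝ}
    (h : Tendsto (fun n => ∑ i ∈ Finset.range n, u i) atTop (𝓝 L)) :
    Tendsto (fun n => (b n)⁻¹ * ∑ i ∈ Finset.range (n + 1), b i * u i) atTop (𝓝 0) := by
  set S : ℕ → ℝ := fun n => ∑ i ∈ Finset.range n, u i with hS
  set g : ℕ → ℝ := fun i => b (i + 1) - b i with hg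
  have hgnn : ∀ i, 0 ≤ g i := fun i => sub_nonneg.2 (hb (Nat.le_succ i))
  have hgsum : ∀ n, ∑ i ∈ Finset.range n, g i = b n - b 0 := fun n => by
    simp only [hg]; exact Finset.sum_range_sub (fun i => b i) n
  have hSL : Tendsto (fun i => S (i + 1) - L) atTop (𝓝 0) := by
    have := (h.comp (tendsto_add_atTop_nat 1)).sub_const L
    simpa using this
  have hF : (fun i => g i * (S (i + 1) - L)) =o[atTop] g := by
    have h1 : (fun i => S (i + 1) - L) =o[atTop] (fun _ => (1 : ℝ)) :=
      (isLittleO_one_iff ℝ).2 hSL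
    have := (isBigO_refl g atTop).mul_isLittleO h1
    simpa [mul_comm] using this
  have hgtop : Tendsto (fun n => ∑ i ∈ Finset.range n, g i) atTop atTop := by
    simp only [hgsum]
    exact tendsto_atTop_add_const_right _ (-b 0) hbtop |>.congr (by intro x; ring_nf)
  have hsumF : (fun n => ∑ i ∈ Finset.range n, g i * (S (i + 1) - L)) =o[atTop]
      (fun n => ∑ i ∈ Finset.range n, g i) := hF.sum_range hgnn hgtop
  have hOb : (fun n => ∑ i ∈ Finset.range n, g i) =O[atTop] b := by
    apply IsBigO.of_bound 1
    filter_upwards with n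
    rw [hgsum]
    have := (hb0 0).le
    have := hb0 n
    rw [Real.norm_eq_abs, Real.norm_eq_abs]
    rw [abs_of_nonneg (by linarith [hb (Nat.zero_le n)] : (0:ℝ) ≤ b n - b 0),
      abs_of_pos (hb0 n)]
    linarith
  have hdiv : Tendsto (fun n => (∑ i ∈ Finset.range n, g i * (S (i + 1) - L)) / b n)
      atTop (𝓝 0) := (hsumF.trans_isBigO hOb).tendsto_div_nhds_zero
  have hbinv : Tendsto (fun n => (b n)⁻¹) atTop (𝓝 0) := tendsto_inv_atTop_zero.comp hbtop
  have hW : Tendsto (fun n => (b n)⁻¹ * ∑ i ∈ Finset.range n, g i * S (i + 1)) atTop (𝓝 L) := by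
    have key : ∀ n, (b n)⁻¹ * ∑ i ∈ Finset.range n, g i * S (i + 1)
        = (1 - b 0 * (b n)⁻¹) * L + (∑ i ∈ Finset.range n, g i * (S (i + 1) - L)) / b n := by
      intro n
      have hbn := (hb0 n).ne'
      have : ∑ i ∈ Finset.range n, g i * S (i + 1)
          = (∑ i ∈ Finset.range n, g i) * L + ∑ i ∈ Finset.range n, g i * (S (i + 1) - L) := by
        rw [Finset.sum_mul, ← Finset.sum_add_distrib]
        exact Finset.sum_congr rfl fun i _ => by ring
      rw [this, hgsum]
      field_simp
    simp only [key]
    have h1 : Tendsto (fun n => (1 - b 0 * (b n)⁻¹) * L) atTop (𝓝 L) := by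
      have : Tendsto (fun n => 1 - b 0 * (b n)⁻¹) atTop (𝓝 1) := by
        simpa using (tendsto_const_nhds (x := (1:ℝ)) (f := atTop)).sub
          ((hbinv.const_mul (b 0)))
      simpa using this.mul_const L
    simpa using h1.add hdiv
  have abel : ∀ n, (b n)⁻¹ * ∑ i ∈ Finset.range (n + 1), b i * u i
      = S (n + 1) - (b n)⁻¹ * ∑ i ∈ Finset.range n, g i * S (i + 1) := by
    intro n
    have hbn := (hb0 n).ne'
    have hparts := Finset.sum_range_by_parts b u (n + 1)
    simp only [smul_eq_mul, Nat.add_sub_cancel] at hparts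
    rw [hparts]
    rw [mul_sub, ← mul_assoc, inv_mul_cancel₀ hbn, one_mul]
  have final : Tendsto (fun n => S (n + 1) - (b n)⁻¹ * ∑ i ∈ Finset.range n, g i * S (i + 1))
      atTop (𝓝 0) := by
    have := (h.comp (tendsto_add_atTop_nat 1)).sub hW
    simpa using this
  exact final.congr fun n => (abel n).symm

lemma my_conj {p : ℝ} (hp : 2 < p) : (p / 2).HolderConjugate (p / (p - 2)) := by
  rw [Real.holderConjugate_iff]
  constructor
  · linarith
  · have h2 : p ≠ 0 := by linarith
    have h3 : p - 2 ≠ 0 := by intro h; have := sub_eq_zero.mp h; linarith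
    field_simp
    ring

lemma my_young {p γ : ℝ} (hp : 2 < p) (y B : ℝ) (hB : 0 < B) :
    (B⁻¹ * y) ^ 2 ≤ |y| ^ p / B ^ γ + B ^ ((2 * γ - 2 * p) / (p - 2)) := by
  have hp0 : (0:ℝ) < p := by linarith
  have hp2 : (0:ℝ) < p - 2 := by linarith
  set t := |y| with ht
  have htnn : 0 ≤ t := abs_nonneg y
  have hA : (0:ℝ) ≤ t ^ p / B ^ γ :=
    div_nonneg (Real.rpow_nonneg htnn p) (Real.rpow_nonneg hB.le γ)
  have key := Real.young_inequality ((t ^ p / B ^ γ) ^ (2 / p)) (B ^ (2 * γ / p - 2)) (my_conj hp)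
  rw [abs_of_nonneg (Real.rpow_nonneg hA _), abs_of_nonneg (Real.rpow_nonneg hB.le _)] at key
  have e1 : ((t ^ p / B ^ γ) ^ (2 / p)) ^ (p / 2) = t ^ p / B ^ γ := by
    rw [← Real.rpow_mul hA]
    have : 2 / p * (p / 2) = 1 := by field_simp
    rw [this, Real.rpow_one]
  have e2 : (B ^ (2 * γ / p - 2)) ^ (p / (p - 2)) = B ^ ((2 * γ - 2 * p) / (p - 2)) := by
    rw [← Real.rpow_mul hB.le]
    congr 1
    field_simp
  have h1 : (t ^ p / B ^ γ) ^ (2 / p) = t ^ (2:ℝ) * B ^ (-(2 * γ / p)) := by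
    rw [Real.div_rpow (Real.rpow_nonneg htnn p) (Real.rpow_nonneg hB.le γ),
      ← Real.rpow_mul htnn, ← Real.rpow_mul hB.le, div_eq_mul_inv, ← Real.rpow_neg hB.le]
    congr 1
    · congr 1; field_simp
    · congr 1; ring
  have h2 : (B⁻¹ * y) ^ 2 = t ^ (2:ℝ) * B ^ (-2:ℝ) := by
    rw [Real.rpow_neg hB.le, show ((2:ℝ)) = ((2:ℕ):ℝ) by norm_num, Real.rpow_natCast,
      Real.rpow_natCast, ht, sq_abs, mul_pow, inv_pow]
    ring
  have e3 : (t ^ p / B ^ γ) ^ (2 / p) * B ^ (2 * γ / p - 2) = (B⁻¹ * y) ^ 2 := by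
    have hexp : -(2 * γ / p) + (2 * γ / p - 2) = (-2:ℝ) := by ring
    rw [h1, mul_assoc, ← Real.rpow_add hB, hexp, h2]
  calc (B⁻¹ * y) ^ 2 = (t ^ p / B ^ γ) ^ (2 / p) * B ^ (2 * γ / p - 2) := e3.symm
    _ ≤ ((t ^ p / B ^ γ) ^ (2 / p)) ^ (p / 2) / (p / 2)
        + (B ^ (2 * γ / p - 2)) ^ (p / (p - 2)) / (p / (p - 2)) := key
    _ = (t ^ p / B ^ γ) / (p / 2) + B ^ ((2 * γ - 2 * p) / (p - 2)) / (p / (p - 2)) := by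
        rw [e1, e2]
    _ ≤ t ^ p / B ^ γ + B ^ ((2 * γ - 2 * p) / (p - 2)) := by
        have hhalf : (1:ℝ) ≤ p / 2 := by linarith
        have hq1 : (1:ℝ) ≤ p / (p - 2) := (one_le_div hp2).2 (by linarith)
        exact add_le_add (div_le_self hA hhalf)
          (div_le_self (Real.rpow_nonneg hB.le _) hq1)

lemma my_sum_shift (v : ℕ → ℝ) (n : ℕ) :
    ∑ i ∈ Finset.range n, (if i = 0 then 0 else v (i + 1)) = ∑ i ∈ Finset.Icc 2 n, v i := by
  induction n with
  | zero => simp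
  | succ n ih =>
    rw [Finset.sum_range_succ, ih]
    rcases Nat.eq_zero_or_pos n with h | h
    · subst h; simp
    · rw [if_neg (by omega), Finset.sum_Icc_succ_top (by omega)]

end Aux

/-- Strong law of large numbers for `p > 2` with general weights. -/
theorem strong_law_of_large_numbers_p_gt_two_weights
    {Ω : Type*} {m0 : MeasurableSpace Ω} {μ : Measure Ω} [IsProbabilityMeasure μ]
    (ℱ : Filtration ℕ m0) (p : ℝ) (hp : 2 < p) (Y : ℕ → Ω → ℝ)
    (hint : ∀ n, 1 ≤ n → Integrable (Y n) μ)
    (hadp : ∀ n, 1 ≤ n → StronglyMeasurable[ℱ n] (Y n))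
    (hmds : ∀ n, 2 ≤ n → μ[Y n | ℱ (n - 1)] =ᵐ[μ] 0)
    (hYp : ∀ n, 1 ≤ n → Integrable (fun ω => |Y n ω| ^ p) μ)
    (a : ℕ → ℝ) (hapos : ∀ n, 1 ≤ n → 0 < a n)
    (hamono : ∀ i j, 1 ≤ i → i ≤ j → a i ≤ a j)
    (k γ : ℝ) (hk : 0 < k)
    (hak : Summable fun i : ℕ => 1 / a (i + 1) ^ k)
    (hγ : γ + (p / 2 - 1) * k ≤ p)
    (hsum : Summable fun i : ℕ => (∫ ω, |Y (i + 1) ω| ^ p ∂μ) / a (i + 1) ^ γ) :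
    ∀ᵐ ω ∂μ, Tendsto (fun n => (a n)⁻¹ * ∑ i ∈ Finset.Icc 1 n, Y i ω) atTop (𝓝 0) := by
  have hp0 : (0:ℝ) < p := by linarith
  set e : ℝ := (2 * γ - 2 * p) / (p - 2) with he
  have hapos' : ∀ i : ℕ, 0 < a (i + 1) := fun i => hapos _ (by omega)
  -- a (· + 1) tends to infinity
  have hrk : Tendsto (fun i => a (i + 1) ^ k) atTop atTop := by
    have h0 : Tendsto (fun i => 1 / a (i + 1) ^ k) atTop (𝓝 0) := hak.tendsto_atTop_zero
    have hpos : ∀ i : ℕ, 0 < 1 / a (i + 1) ^ k := fun i => by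
      have := hapos' i; positivity
    have := Filter.Tendsto.inv_tendsto_nhdsGT_zero
      (tendsto_nhdsWithin_of_tendsto_nhds_of_eventually_within _ h0
        (Eventually.of_forall hpos))
    have heq : ∀ i : ℕ, (1 / a (i + 1) ^ k)⁻¹ = a (i + 1) ^ k := fun i => by
      rw [one_div, inv_inv]
    exact this.congr heq
  have hatop' : Tendsto (fun i : ℕ => a (i + 1)) atTop atTop := by
    have h1 := (tendsto_rpow_atTop (y := 1 / k) (by positivity)).comp hrk
    apply h1.congr
    intro i
    simp only [Function.comp_apply]
    rw [← Real.rpow_mul (hapos' i).le, mul_one_div, div_self hk.ne', Real.rpow_one]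
  have hatop : Tendsto a atTop atTop := (tendsto_add_atTop_iff_nat 1).1 hatop'
  -- summability of the error terms
  have hee : e ≤ -k := by
    rw [he, div_le_iff₀ (by linarith : (0:ℝ) < p - 2)]
    nlinarith
  obtain ⟨N, hN⟩ := eventually_atTop.1 (hatop'.eventually_ge_atTop 1)
  have hsum_e : Summable (fun i : ℕ => a (i + 1) ^ e) := by
    rw [← summable_nat_add_iff N]
    apply Summable.of_nonneg_of_le (fun i => Real.rpow_nonneg (hapos' _).le e)
      (fun i => ?_) ((summable_nat_add_iff N).2 hak)
    have h1 : (1:ℝ) ≤ a (i + N + 1) := hN (i + N) (Nat.le_add_left N i)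
    rw [one_div, ← Real.rpow_neg (hapos' (i + N)).le]
    exact Real.rpow_le_rpow_of_exponent_le h1 hee
  set w : ℕ → ℝ := fun i => (∫ ω, |Y (i + 1) ω| ^ p ∂μ) / a (i + 1) ^ γ + a (i + 1) ^ e
    with hw
  have hwsummable : Summable w := hsum.add hsum_e
  have hwnn : ∀ i, 0 ≤ w i := fun i =>
    add_nonneg (div_nonneg (integral_nonneg fun ω => Real.rpow_nonneg (abs_nonneg _) p)
      (Real.rpow_nonneg (hapos' i).le γ)) (Real.rpow_nonneg (hapos' i).le e)
  set C : ℝ := ∑' i, w i with hC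
  have hCnn : 0 ≤ C := tsum_nonneg hwnn
  have hsumle : ∀ n, ∑ j ∈ Finset.range n, w j ≤ C := fun n =>
    Summable.sum_le_tsum _ (fun i _ => hwnn i) hwsummable
  -- L^2 membership
  have hmem2 : ∀ i, 1 ≤ i → MemLp (Y i) 2 μ := by
    intro i hi
    have hq0 : ENNReal.ofReal p ≠ 0 := by
      simp only [ne_eq, ENNReal.ofReal_eq_zero, not_le]; linarith
    have hqt : ENNReal.ofReal p ≠ ⊤ := ENNReal.ofReal_ne_top
    have hmp : MemLp (Y i) (ENNReal.ofReal p) μ := by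
      refine (memLp_norm_rpow_iff (q := ENNReal.ofReal p)
        (hint i hi).aestronglyMeasurable hq0 hqt).1 ?_
      rw [ENNReal.div_self hq0 hqt, memLp_one_iff_integrable,
        ENNReal.toReal_ofReal hp0.le]
      simpa [Real.norm_eq_abs] using hYp i hi
    refine hmp.mono_exponent ?_
    calc (2:ℝ≥0∞) = ENNReal.ofReal 2 := by norm_num
      _ ≤ ENNReal.ofReal p := ENNReal.ofReal_le_ofReal hp.le
  set Z : ℕ → Ω → ℝ := fun i ω => (a i)⁻¹ * Y i ω with hZ
  have hmemZ : ∀ i, 1 ≤ i → MemLp (Z i) 2 μ := fun i hi => (hmem2 i hi).const_mul _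
  have hintZ : ∀ i, 1 ≤ i → Integrable (Z i) μ := fun i hi => (hint i hi).const_mul _
  set f : ℕ → Ω → ℝ := fun n ω => ∑ i ∈ Finset.Icc 2 n, Z i ω with hf
  have hmemf : ∀ n, MemLp (f n) 2 μ := fun n =>
    memLp_finset_sum _ (fun i hi => hmemZ i (by have := (Finset.mem_Icc.1 hi).1; omega))
  have hintf : ∀ n, Integrable (f n) μ := fun n =>
    integrable_finset_sum _ (fun i hi => hintZ i (by have := (Finset.mem_Icc.1 hi).1; omega))
  have hadpf : ∀ n, StronglyMeasurable[ℱ n] (f n) := by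
    intro n
    apply Finset.stronglyMeasurable_fun_sum
    intro i hi
    have hi' := Finset.mem_Icc.1 hi
    exact ((hadp i (by omega)).mono (ℱ.mono hi'.2)).const_mul _
  -- conditional expectation of increments vanishes
  have hcondZ : ∀ n, 1 ≤ n → μ[Z (n + 1) | ℱ n] =ᵐ[μ] 0 := by
    intro n hn
    have h1 : μ[Y (n + 1) | ℱ n] =ᵐ[μ] 0 := by
      have := hmds (n + 1) (by omega)
      simpa using this
    have hZeq : Z (n + 1) = ((a (n + 1))⁻¹ : ℝ) • (Y (n + 1)) := by
      funext ω; simp [hZ, smul_eq_mul]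
    rw [hZeq]
    refine (condExp_smul _ _ _).trans ?_
    filter_upwards [h1] with ω hω
    simp [hω]
  -- martingale property
  have hstep : ∀ n, 1 ≤ n → f (n + 1) = f n + Z (n + 1) := by
    intro n hn
    funext ω
    exact Finset.sum_Icc_succ_top (by omega) _
  have hf10 : f 1 = 0 := by
    funext ω
    simp [hf, Finset.Icc_eq_empty (by omega : ¬ (2:ℕ) ≤ 1)]
  have hf00 : f 0 = 0 := by
    funext ω
    simp [hf, Finset.Icc_eq_empty (by omega : ¬ (2:ℕ) ≤ 0)]
  have hmart : Martingale f ℱ μ := by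
    refine martingale_nat (fun n => hadpf n) hintf ?_
    intro n
    rcases Nat.eq_zero_or_pos n with h | h
    · subst h
      rw [hf00, hf10, condExp_zero]
    · rw [hstep n h]
      have hadd := condExp_add (μ := μ) (m := ℱ n) (hintf n) (hintZ (n + 1) (by omega))
      have hfix : μ[f n | ℱ n] = f n :=
        condExp_of_stronglyMeasurable (ℱ.le n) (hadpf n) (hintf n)
      refine EventuallyEq.symm (hadd.trans ?_)
      filter_upwards [hcondZ n h] with ω hω
      simp only [Pi.add_apply, hfix, hω, Pi.zero_apply, add_zero]
  -- second moment bound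
  have hV : ∀ n, ∫ ω, (f n ω) ^ 2 ∂μ ≤ C := by
    have key : ∀ n, ∫ ω, (f n ω) ^ 2 ∂μ ≤ ∑ j ∈ Finset.range n, w j := by
      intro n
      induction n with
      | zero =>
        have : ∀ ω, (f 0 ω) ^ 2 = 0 := fun ω => by rw [hf00]; simp
        simp [this]
      | succ n ih =>
        rcases Nat.eq_zero_or_pos n with h | h
        · subst h
          have : ∀ ω, (f 1 ω) ^ 2 = 0 := fun ω => by rw [hf10]; simp
          simp only [this, integral_zero]
          exact Finset.sum_nonneg fun j _ => hwnn j
        · have hZm := hmemZ (n + 1) (by omega)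
          have hfm := hmemf n
          have hintf2 : Integrable (fun ω => (f n ω) ^ 2) μ := hfm.integrable_sq
          have hintZ2 : Integrable (fun ω => (Z (n + 1) ω) ^ 2) μ := hZm.integrable_sq
          have hbound : Integrable (fun ω => ((f n ω) ^ 2 + (Z (n + 1) ω) ^ 2) / 2) μ :=
            (hintf2.add hintZ2).div_const 2
          have hintfZ : Integrable (fun ω => f n ω * Z (n + 1) ω) μ := by
            refine Integrable.mono' hbound
              (hfm.aestronglyMeasurable.mul hZm.aestronglyMeasurable)
              (Eventually.of_forall fun ω => ?_)
            rw [Real.norm_eq_abs, abs_le]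
            constructor <;>
              nlinarith [sq_nonneg (f n ω - Z (n + 1) ω), sq_nonneg (f n ω + Z (n + 1) ω)]
          have hcross : ∫ ω, f n ω * Z (n + 1) ω ∂μ = 0 := by
            have hmul : μ[f n * Z (n + 1) | ℱ n] =ᵐ[μ] f n * μ[Z (n + 1) | ℱ n] :=
              condExp_mul_of_stronglyMeasurable_left (hadpf n) hintfZ (hintZ (n + 1) (by omega))
            have h0 : μ[f n * Z (n + 1) | ℱ n] =ᵐ[μ] 0 := by
              refine hmul.trans ?_
              filter_upwards [hcondZ n h] with ω hω
              simp [hω]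
            have h2 := integral_condExp (μ := μ) (f := f n * Z (n + 1)) (ℱ.le n)
            rw [integral_congr_ae h0] at h2
            simp only [Pi.zero_apply, integral_zero] at h2
            exact h2.symm
          have hexp : ∫ ω, (f (n + 1) ω) ^ 2 ∂μ
              = ∫ ω, (f n ω) ^ 2 ∂μ + 2 * ∫ ω, f n ω * Z (n + 1) ω ∂μ
                + ∫ ω, (Z (n + 1) ω) ^ 2 ∂μ := by
            have h1 : ∀ ω, (f (n + 1) ω) ^ 2
                = (f n ω) ^ 2 + (2 * (f n ω * Z (n + 1) ω) + (Z (n + 1) ω) ^ 2) := by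
              intro ω
              rw [hstep n h]
              simp only [Pi.add_apply]
              ring
            calc ∫ ω, (f (n + 1) ω) ^ 2 ∂μ
                = ∫ ω, ((f n ω) ^ 2 + (2 * (f n ω * Z (n + 1) ω) + (Z (n + 1) ω) ^ 2)) ∂μ :=
                  integral_congr_ae (Eventually.of_forall h1)
              _ = _ := by
                  have hfZ2 : Integrable (fun ω => 2 * (f n ω * Z (n + 1) ω)) μ :=
                    hintfZ.const_mul 2
                  have hg' : Integrable
                      (fun ω => 2 * (f n ω * Z (n + 1) ω) + (Z (n + 1) ω) ^ 2) μ :=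
                    hfZ2.add hintZ2
                  rw [integral_add hintf2 hg', integral_add hfZ2 hintZ2, integral_const_mul]
                  ring
          have hZbound : ∫ ω, (Z (n + 1) ω) ^ 2 ∂μ ≤ w n := by
            have hptwise : ∀ ω, (Z (n + 1) ω) ^ 2
                ≤ |Y (n + 1) ω| ^ p / a (n + 1) ^ γ + a (n + 1) ^ e := fun ω => by
              simpa [hZ, he] using my_young hp (Y (n + 1) ω) (a (n + 1)) (hapos' n)
            have hYint := hYp (n + 1) (by omega)
            have hrhs_int : Integrable
                (fun ω => |Y (n + 1) ω| ^ p / a (n + 1) ^ γ + a (n + 1) ^ e) μ :=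
              (hYint.div_const _).add (integrable_const _)
            calc ∫ ω, (Z (n + 1) ω) ^ 2 ∂μ
                ≤ ∫ ω, (|Y (n + 1) ω| ^ p / a (n + 1) ^ γ + a (n + 1) ^ e) ∂μ :=
                  integral_mono hintZ2 hrhs_int hptwise
              _ = w n := by
                  rw [integral_add (hYint.div_const _) (integrable_const _),
                    integral_div, integral_const]
                  simp [hw]
          rw [hexp, hcross, Finset.sum_range_succ]
          have := ih
          linarith
    exact fun n => (key n).trans (hsumle n)
  -- L^1 boundedness
  have hbdd : ∀ n, eLpNorm (f n) 1 μ ≤ ENNReal.ofReal (C ^ (2:ℝ)⁻¹) := by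
    intro n
    have h12 : eLpNorm (f n) 1 μ ≤ eLpNorm (f n) 2 μ :=
      eLpNorm_le_eLpNorm_of_exponent_le (by norm_num) (hmemf n).aestronglyMeasurable
    refine h12.trans ?_
    rw [(hmemf n).eLpNorm_eq_integral_rpow_norm (by norm_num) (by norm_num)]
    apply ENNReal.ofReal_le_ofReal
    have htoReal : (2:ℝ≥0∞).toReal = (2:ℝ) := by norm_num
    rw [htoReal]
    have hinteq : ∫ ω, ‖f n ω‖ ^ (2:ℝ) ∂μ = ∫ ω, (f n ω) ^ 2 ∂μ := by
      apply integral_congr_ae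
      filter_upwards with ω
      rw [show ((2:ℝ)) = ((2:ℕ):ℝ) by norm_num, Real.rpow_natCast, Real.norm_eq_abs, sq_abs]
    rw [hinteq]
    apply Real.rpow_le_rpow (integral_nonneg fun ω => sq_nonneg _) (hV n)
    norm_num
  -- almost sure convergence of the weighted series
  have hconv := hmart.submartingale.ae_tendsto_limitProcess
    (R := (C ^ (2:ℝ)⁻¹).toNNReal) (fun n => by
      refine (hbdd n).trans (le_of_eq ?_)
      rfl)
  filter_upwards [hconv] with ω hω
  set L : ℝ := ℱ.limitProcess f μ ω with hL
  -- apply Kronecker's lemma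
  have hbmono : Monotone (fun i : ℕ => a (i + 1)) := fun i j hij =>
    hamono _ _ (by omega) (by omega)
  have hu : Tendsto
      (fun n => ∑ i ∈ Finset.range n, (if i = 0 then 0 else Z (i + 1) ω)) atTop (𝓝 L) := by
    have hsame : ∀ n, ∑ i ∈ Finset.range n, (if i = 0 then 0 else Z (i + 1) ω) = f n ω :=
      fun n => my_sum_shift (fun i => Z i ω) n
    simp only [hsame]
    exact hω
  have hK := my_kronecker hbmono (fun n => hapos' n) hatop' hu
  have hid : ∀ n, ∑ i ∈ Finset.range (n + 1),
      a (i + 1) * (if i = 0 then 0 else Z (i + 1) ω) = ∑ i ∈ Finset.Icc 2 (n + 1), Y i ω := by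
    intro n
    rw [← my_sum_shift (fun i => Y i ω) (n + 1)]
    apply Finset.sum_congr rfl
    intro i _
    rcases Nat.eq_zero_or_pos i with h | h
    · subst h; simp
    · rw [if_neg (by omega), if_neg (by omega)]
      simp only [hZ]
      rw [← mul_assoc, mul_inv_cancel₀ (hapos' i).ne', one_mul]
  simp only [hid] at hK
  have hG : Tendsto (fun n => (a n)⁻¹ * ∑ i ∈ Finset.Icc 2 n, Y i ω) atTop (𝓝 0) :=
    (tendsto_add_atTop_iff_nat 1).1 hK
  have hY1 : Tendsto (fun n => (a n)⁻¹ * Y 1 ω) atTop (𝓝 0) := by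
    have := (tendsto_inv_atTop_zero.comp hatop).mul_const (Y 1 ω)
    simpa using this
  have hsum0 := hY1.add hG
  rw [add_zero] at hsum0
  apply hsum0.congr'
  filter_upwards [eventually_ge_atTop 1] with n hn
  have hIcc : Finset.Icc 1 n = insert 1 (Finset.Icc 2 n) := by
    ext x
    simp only [Finset.mem_Icc, Finset.mem_insert]
    omega
  rw [hIcc, Finset.sum_insert (by simp)]
  ring
end

section
/- Band projections commute with countable suprema (evaluated form): let E be a conditionally complete lattice-ordered abelian group (e.g., a Dedekind complete Riesz space), let e ∈ E with e ≥ 0, and let (f_n)_{n∈ℕ} be a sequence in E with f_n ≥ 0 for all n that is bounded above. Then ⨆_{m∈ℕ} ( e ⊓ (m • ⨆_{n∈ℕ} f_n) ) = ⨆_{n∈ℕ} ⨆_{m∈ℕ} ( e ⊓ (m • f_n) ). (All suprema involved exist, since each element e ⊓ (m • f) with f ≥ 0 lies between 0 and e.) -/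
section Aux

variable {E : Type*} [ConditionallyCompleteLattice E] [AddCommGroup E]
    [CovariantClass E E (· + ·) (· ≤ ·)]

private lemma aux_add_ciSup {ι : Type*} [Nonempty ι] (a : E) (s : ι → E)
    (h : BddAbove (Set.range s)) : a + ⨆ i, s i = ⨆ i, a + s i := by
  have hb : BddAbove (Set.range fun i => a + s i) := by
    obtain ⟨c, hc⟩ := h
    exact ⟨a + c, by rintro _ ⟨i, rfl⟩; exact add_le_add_right (hc ⟨i, rfl⟩) a⟩
  refine le_antisymm ?_ (ciSup_le fun i => add_le_add_right (le_ciSup h i) a)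
  have h1 : (⨆ i, s i) ≤ (⨆ i, a + s i) - a :=
    ciSup_le fun i => le_sub_iff_add_le'.mpr (le_ciSup hb i)
  calc a + ⨆ i, s i ≤ a + ((⨆ i, a + s i) - a) := add_le_add_right h1 a
    _ = ⨆ i, a + s i := by abel

private lemma aux_inf_ciSup {ι : Type*} [Nonempty ι] (e : E) (s : ι → E)
    (h : BddAbove (Set.range s)) : e ⊓ ⨆ i, s i = ⨆ i, e ⊓ s i := by
  have hb : BddAbove (Set.range fun i => e ⊓ s i) :=
    ⟨e, by rintro _ ⟨i, rfl⟩; exact inf_le_left⟩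
  refine le_antisymm ?_ (ciSup_le fun i => inf_le_inf_left e (le_ciSup h i))
  set b := ⨆ i, e ⊓ s i with hbdef
  have key : ∀ i, s i ≤ b + (e ⊔ ⨆ i, s i) - e := by
    intro i
    have h1 : e ⊓ s i + (e ⊔ s i) = e + s i := inf_add_sup e (s i)
    have h2 : e ⊓ s i ≤ b := le_ciSup hb i
    have h3 : e ⊔ s i ≤ e ⊔ ⨆ i, s i := sup_le_sup_left (le_ciSup h i) e
    have h4 : e + s i ≤ b + (e ⊔ ⨆ i, s i) := by rw [← h1]; exact add_le_add h2 h3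
    calc s i = e + s i - e := by abel
      _ ≤ b + (e ⊔ ⨆ i, s i) - e := sub_le_sub_right h4 e
  have hS : (⨆ i, s i) ≤ b + (e ⊔ ⨆ i, s i) - e := ciSup_le key
  have h4 : e ⊓ (⨆ i, s i) + (e ⊔ ⨆ i, s i) = e + ⨆ i, s i := inf_add_sup _ _
  have h5 : e + (⨆ i, s i) ≤ e + (b + (e ⊔ ⨆ i, s i) - e) := add_le_add_right hS e
  calc e ⊓ (⨆ i, s i) = e + (⨆ i, s i) - (e ⊔ ⨆ i, s i) := by rw [← h4]; abel
    _ ≤ e + (b + (e ⊔ ⨆ i, s i) - e) - (e ⊔ ⨆ i, s i) := sub_le_sub_right h5 _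
    _ = b := by abel

private lemma aux_inf_add_le (e a b : E) (he : 0 ≤ e) (ha : 0 ≤ a) (hb : 0 ≤ b) :
    e ⊓ (a + b) ≤ e ⊓ a + e ⊓ b := by
  have hrw : e ⊓ a + e ⊓ b = ((e + e) ⊓ (a + e)) ⊓ ((e + b) ⊓ (a + b)) := by
    rw [add_inf, inf_add, inf_add]
  rw [hrw]
  refine le_inf (le_inf ?_ ?_) (le_inf ?_ inf_le_right)
  · exact le_trans inf_le_left (le_add_of_nonneg_right he)
  · exact le_trans inf_le_left (le_add_of_nonneg_left ha)
  · exact le_trans inf_le_left (le_add_of_nonneg_right hb)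

private lemma aux_disj_smul {x y : E} (hx : 0 ≤ x) (hy : 0 ≤ y) (hxy : x ⊓ y = 0)
    (m : ℕ) : x ⊓ m • y = 0 := by
  induction m with
  | zero => simpa using hx
  | succ k ih =>
      refine le_antisymm ?_ (le_inf hx (nsmul_nonneg hy _))
      calc x ⊓ ((k + 1) • y) = x ⊓ (k • y + y) := by rw [succ_nsmul]
        _ ≤ x ⊓ (k • y) + x ⊓ y := aux_inf_add_le x _ y hx (nsmul_nonneg hy k) hy
        _ = 0 := by rw [ih, hxy, add_zero]

private lemma aux_disj_smul₂ {x y : E} (hx : 0 ≤ x) (hy : 0 ≤ y) (hxy : x ⊓ y = 0)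
    (m k : ℕ) : m • x ⊓ k • y = 0 := by
  have h1 : x ⊓ k • y = 0 := aux_disj_smul hx hy hxy k
  have h2 := aux_disj_smul (nsmul_nonneg hy k) hx (by rw [inf_comm, h1]) m
  rw [inf_comm] at h2
  exact h2

private lemma aux_nsmul_posPart (m : ℕ) (a : E) : m • a⁺ = (m • a)⁺ := by
  set p := m • a⁺ with hp
  set q := m • a⁻ with hq
  have hdisj : p ⊓ q = 0 :=
    aux_disj_smul₂ (posPart_nonneg a) (negPart_nonneg a) (posPart_inf_negPart_eq_zero a) m m
  have hsub : p - q = m • a := by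
    rw [hp, hq, ← smul_sub, posPart_sub_negPart]
  have hsup : p ⊔ q = p + q := by
    have h := inf_add_sup p q
    rw [hdisj, zero_add] at h
    exact h
  calc m • a⁺ = p := rfl
    _ = (p + q) - q := by abel
    _ = (p ⊔ q) - q := by rw [hsup]
    _ = (p - q) ⊔ (q - q) := by rw [sup_sub]
    _ = (m • a) ⊔ 0 := by rw [hsub, sub_self]
    _ = (m • a)⁺ := (posPart_def (m • a)).symm

private lemma aux_nsmul_sup (m : ℕ) (a b : E) : m • (a ⊔ b) = m • a ⊔ m • b := by
  have h1 : a ⊔ b = b + (a - b)⁺ := sup_eq_add_posPart_sub a b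
  calc m • (a ⊔ b) = m • b + m • ((a - b)⁺) := by rw [h1, smul_add]
    _ = m • b + (m • (a - b))⁺ := by rw [aux_nsmul_posPart]
    _ = m • b + ((m • a - m • b) ⊔ 0) := by rw [posPart_def, smul_sub]
    _ = (m • b + (m • a - m • b)) ⊔ (m • b + 0) := by rw [add_sup]
    _ = m • a ⊔ m • b := by rw [add_zero]; congr 1; abel

private lemma aux_inf_sup_le (e x y : E) : e ⊓ (x ⊔ y) ≤ (e ⊓ x) ⊔ (e ⊓ y) := by
  have hx : e ⊓ x = (e + x) - (e ⊔ x) := by rw [← inf_add_sup e x]; abel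
  have hy : e ⊓ y = (e + y) - (e ⊔ y) := by rw [← inf_add_sup e y]; abel
  have h0 : e ⊓ (x ⊔ y) = ((e + x) - (e ⊔ x ⊔ y)) ⊔ ((e + y) - (e ⊔ x ⊔ y)) := by
    rw [← sup_sub, ← add_sup, sup_assoc]
    rw [← inf_add_sup e (x ⊔ y)]; abel
  rw [h0, hx, hy]
  refine sup_le_sup ?_ ?_
  · exact sub_le_sub_left le_sup_left (e + x)
  · exact sub_le_sub_left (sup_le (le_sup_left.trans le_sup_left) le_sup_right) (e + y)

end Aux

/-- Band projections commute with countable suprema (evaluated form). -/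
theorem band_projection_iSup
    {E : Type*} [ConditionallyCompleteLattice E] [AddCommGroup E]
    [CovariantClass E E (· + ·) (· ≤ ·)]
    (e : E) (he : 0 ≤ e) (f : ℕ → E) (hf : ∀ n, 0 ≤ f n)
    (hbdd : BddAbove (Set.range f)) :
    ⨆ m : ℕ, (e ⊓ m • ⨆ n, f n) = ⨆ n, ⨆ m : ℕ, (e ⊓ m • f n) := by
  set S := ⨆ n, f n with hS
  have hbL : BddAbove (Set.range fun m : ℕ => e ⊓ m • S) :=
    ⟨e, by rintro _ ⟨m, rfl⟩; exact inf_le_left⟩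
  have hbInner : ∀ n, BddAbove (Set.range fun m : ℕ => e ⊓ m • f n) :=
    fun n => ⟨e, by rintro _ ⟨m, rfl⟩; exact inf_le_left⟩
  have hinner_le_e : ∀ n, (⨆ m : ℕ, e ⊓ m • f n) ≤ e :=
    fun n => ciSup_le fun _ => inf_le_left
  have hbR : BddAbove (Set.range fun n => ⨆ m : ℕ, e ⊓ m • f n) :=
    ⟨e, by rintro _ ⟨n, rfl⟩; exact hinner_le_e n⟩
  set u := ⨆ n, ⨆ m : ℕ, e ⊓ m • f n with hu
  -- partial suprema
  set g : ℕ → E := fun k => (Nat.rec (f 0) (fun k acc => acc ⊔ f (k + 1)) k : E) with hg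
  have hg0 : g 0 = f 0 := rfl
  have hgsucc : ∀ k, g (k + 1) = g k ⊔ f (k + 1) := fun _ => rfl
  have hgmono : Monotone g := by
    apply monotone_nat_of_le_succ
    intro k; rw [hgsucc]; exact le_sup_left
  have hf_le_g : ∀ n, f n ≤ g n := by
    intro n
    cases n with
    | zero => exact le_of_eq hg0.symm
    | succ k => rw [hgsucc]; exact le_sup_right
  have hg_le_S : ∀ k, g k ≤ S := by
    intro k
    induction k with
    | zero => exact le_ciSup hbdd 0
    | succ k ih => rw [hgsucc]; exact sup_le ih (le_ciSup hbdd (k + 1))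
  have hbg : BddAbove (Set.range g) := ⟨S, by rintro _ ⟨k, rfl⟩; exact hg_le_S k⟩
  have hSg : S = ⨆ k, g k :=
    le_antisymm (ciSup_le fun n => le_trans (hf_le_g n) (le_ciSup hbg n))
      (ciSup_le fun k => hg_le_S k)
  have hsmul_mono : ∀ (m : ℕ) {x y : E}, x ≤ y → m • x ≤ m • y := by
    intro m x y hxy
    induction m with
    | zero => simp
    | succ k ih => rw [succ_nsmul, succ_nsmul]; exact add_le_add ih hxy
  have hbmg : ∀ m : ℕ, BddAbove (Set.range fun k => m • g k) :=
    fun m => ⟨m • S, by rintro _ ⟨k, rfl⟩; exact hsmul_mono m (hg_le_S k)⟩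
  -- Step 1 : m • S = ⨆ k, m • g k
  have step1 : ∀ m : ℕ, m • S = ⨆ k, m • g k := by
    intro m
    induction m with
    | zero => simp
    | succ m ih =>
        have hbdiag : BddAbove (Set.range fun k => g k + m • g k) := by
          refine ⟨S + m • S, ?_⟩
          rintro _ ⟨k, rfl⟩
          exact add_le_add (hg_le_S k) (hsmul_mono m (hg_le_S k))
        have hbj : ∀ j, BddAbove (Set.range fun k => g j + m • g k) := by
          intro j
          refine ⟨g j + m • S, ?_⟩
          rintro _ ⟨k, rfl⟩
          exact add_le_add_right (hsmul_mono m (hg_le_S k)) _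
        have hbout : BddAbove (Set.range fun j => ⨆ k, (g j + m • g k)) := by
          refine ⟨S + m • S, ?_⟩
          rintro _ ⟨j, rfl⟩
          exact ciSup_le fun k =>
            add_le_add (hg_le_S j) (hsmul_mono m (hg_le_S k))
        have e1 : (m + 1) • S = (⨆ k, m • g k) + S := by
          rw [succ_nsmul, ih, add_comm]
        have e2 : (⨆ k, m • g k) + S = ⨆ j, ((⨆ k, m • g k) + g j) := by
          rw [hSg]; exact aux_add_ciSup _ _ hbg
        have e3 : ∀ j, (⨆ k, m • g k) + g j = ⨆ k, (g j + m • g k) := by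
          intro j
          rw [add_comm]
          exact aux_add_ciSup (g j) _ (hbmg m)
        have e4 : (⨆ j, ((⨆ k, m • g k) + g j)) = ⨆ j, ⨆ k, (g j + m • g k) :=
          iSup_congr e3
        have e5 : (⨆ j, ⨆ k, (g j + m • g k)) = ⨆ k, (g k + m • g k) := by
          refine le_antisymm (ciSup_le fun j => ciSup_le fun k => ?_)
            (ciSup_le fun k => le_trans (le_ciSup (hbj k) k) (le_ciSup hbout k))
          calc g j + m • g k
              ≤ g (max j k) + m • g (max j k) :=
                add_le_add (hgmono (le_max_left j k))
                  (hsmul_mono m (hgmono (le_max_right j k)))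
            _ ≤ ⨆ k, (g k + m • g k) := le_ciSup hbdiag (max j k)
        have e6 : ∀ k, g k + m • g k = (m + 1) • g k := by
          intro k; rw [succ_nsmul, add_comm]
        rw [e1, e2, e4, e5]
        exact iSup_congr e6
  -- Step 3 : e ⊓ m • g k ≤ u
  have step3 : ∀ (m k : ℕ), e ⊓ m • g k ≤ u := by
    intro m k
    induction k with
    | zero =>
        exact le_trans (le_ciSup (hbInner 0) m) (le_ciSup hbR 0)
    | succ k ih =>
        have h1 : e ⊓ m • g (k + 1) ≤ (e ⊓ m • g k) ⊔ (e ⊓ m • f (k + 1)) := by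
          rw [hgsucc, aux_nsmul_sup]
          exact aux_inf_sup_le e _ _
        refine le_trans h1 (sup_le ih ?_)
        exact le_trans (le_ciSup (hbInner (k + 1)) m) (le_ciSup hbR (k + 1))
  refine le_antisymm (ciSup_le fun m => ?_) ?_
  · rw [step1 m, aux_inf_ciSup e _ (hbmg m)]
    exact ciSup_le fun k => step3 m k
  · refine ciSup_le fun n => ciSup_le fun m => ?_
    exact le_trans (inf_le_inf_left e (hsmul_mono m (le_ciSup hbdd n)))
      (le_ciSup hbL m)
end
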